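/- arXiv:1711.02747 — 14 statements merged into one kernel-verified Lean document; each statement's English description precedes it below -/
import Mathlib

section
/- Let ψ : E → ℝ be convex on the convex set Q, let z ∈ E and y ∈ Q, and suppose there exists a subgradient g of ψ at y on Q (i.e. ψ(x) ≥ ψ(y) + g(x − y) for all x ∈ Q) such that (g + d′(y) − d′(z))(x − y) ≥ −δ̃ for all x ∈ Q (i.e. y is a δ̃-approximate minimizer of x ↦ ψ(x) + V(x,z) over Q in the sense of Definition 4). Then for all x ∈ Q: ψ(x) + V(x,z) ≥ ψ(y) + V(y,z) + V(x,y) − δ̃. -/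
/-- If `y ∈ Q` is a `δ̃`-approximate minimizer (in the sense of
Definition 4) of `x ↦ ψ x + V x z` over `Q`, where `ψ` is convex and
`V x y = d x − d y − d′ y (x − y)` is the Bregman divergence, then
`ψ x + V x z ≥ ψ y + V y z + V x y − δ̃` for all `x ∈ Q`. -/
theorem stmt3 {E : Type*} [NormedAddCommGroup E] [NormedSpace ℝ E]
    (Q : Set E) (hQ : Convex ℝ Q)
    (d : E → ℝ) (d' : E → (E →L[ℝ] ℝ)) (hd : ∀ x, HasFDerivAt d (d' x) x)
    (V : E → E → ℝ) (hV : ∀ x y, V x y = d x - d y - d' y (x - y))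
    (δt : ℝ) (hδt : 0 ≤ δt)
    (ψ : E → ℝ) (hψ : ConvexOn ℝ Q ψ)
    (z : E) (y : E) (hy : y ∈ Q)
    (g : E →L[ℝ] ℝ)
    (hsub : ∀ x ∈ Q, ψ y + g (x - y) ≤ ψ x)
    (happrox : ∀ x ∈ Q, -δt ≤ g (x - y) + (d' y) (x - y) - (d' z) (x - y)) :
    ∀ x ∈ Q, ψ y + V y z + V x y - δt ≤ ψ x + V x z := by
  intro x hx
  have h1 := hsub x hx
  have h2 := happrox x hx
  have h3 : d' z (x - z) = d' z (x - y) + d' z (y - z) := by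
    rw [← map_add]; congr 1; abel
  rw [hV x z, hV y z, hV x y]
  linarith
end

section
/- Let α > 0, δ ≥ 0, δ̃ ≥ 0, let x_k ∈ Q and x_{k+1} ∈ Q, let F : Q → ℝ, let F₀ ∈ ℝ and ψ : E → ℝ convex on Q with: (i) F₀ + ψ(x) ≤ F(x) for all x ∈ Q (left model inequality at x_k); (ii) F(x_{k+1}) ≤ F₀ + ψ(x_{k+1}) + (1/(2α))‖x_{k+1} − x_k‖² + 2δ (accepted step condition combined with the model upper bound); (iii) V(x,y) ≥ (1/2)‖x − y‖² for all x, y ∈ Q; (iv) there exists a subgradient g of x ↦ α·ψ(x) at x_{k+1} on Q with (g + d′(x_{k+1}) − d′(x_k))(x − x_{k+1}) ≥ −δ̃ for all x ∈ Q (x_{k+1} is a δ̃-approximate minimizer of x ↦ V(x,x_k) + α·ψ(x) over Q in the sense of Definition 4). Then for all x ∈ Q: α·F(x_{k+1}) − α·F(x) ≤ V(x,x_k) − V(x,x_{k+1}) + δ̃ + 2δα. -/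
/-- The per-iteration inequality of the gradient method with a
`(δ, L)`-model oracle and `δ̃`-inexact auxiliary minimization: under the left
model inequality, the accepted step condition, the strong-convexity lower bound
on the Bregman divergence `V`, and the `δ̃`-approximate optimality of `x_{k+1}`
for `x ↦ V(x, x_k) + α ψ(x)` over `Q`, one has, for all `x ∈ Q`,
`α F(x_{k+1}) − α F(x) ≤ V(x, x_k) − V(x, x_{k+1}) + δ̃ + 2δα`. -/
theorem stmt5 {E : Type*} [NormedAddCommGroup E] [NormedSpace ℝ E]
    (Q : Set E) (hQ : Convex ℝ Q)
    (d : E → ℝ) (d' : E → (E →L[ℝ] ℝ)) (hd : ∀ x, HasFDerivAt d (d' x) x)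
    (V : E → E → ℝ) (hV : ∀ x y, V x y = d x - d y - d' y (x - y))
    (α δ δt : ℝ) (hα : 0 < α) (hδ : 0 ≤ δ) (hδt : 0 ≤ δt)
    (xk xk1 : E) (hxk : xk ∈ Q) (hxk1 : xk1 ∈ Q)
    (F : E → ℝ) (F₀ : ℝ) (ψ : E → ℝ) (hψ : ConvexOn ℝ Q ψ)
    (hleft : ∀ x ∈ Q, F₀ + ψ x ≤ F x)
    (hstep : F xk1 ≤ F₀ + ψ xk1 + 1 / (2 * α) * ‖xk1 - xk‖ ^ 2 + 2 * δ)
    (hVlow : ∀ x ∈ Q, ∀ y ∈ Q, 1/2 * ‖x - y‖ ^ 2 ≤ V x y)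
    (g : E →L[ℝ] ℝ)
    (hsub : ∀ x ∈ Q, α * ψ xk1 + g (x - xk1) ≤ α * ψ x)
    (happrox : ∀ x ∈ Q, -δt ≤ g (x - xk1) + d' xk1 (x - xk1) - d' xk (x - xk1)) :
    ∀ x ∈ Q, α * F xk1 - α * F x ≤ V x xk - V x xk1 + δt + 2 * δ * α := by
  intro x hx
  have h1 := hleft x hx
  have h2 := hsub x hx
  have h3 := happrox x hx
  have h4 := hVlow xk1 hxk1 xk hxk
  have hmul : α * (F₀ + ψ x) ≤ α * F x := mul_le_mul_of_nonneg_left h1 hα.le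
  have hmul2 : α * F xk1 ≤ α * (F₀ + ψ xk1 + 1 / (2 * α) * ‖xk1 - xk‖ ^ 2 + 2 * δ) :=
    mul_le_mul_of_nonneg_left hstep hα.le
  have e : α * (1 / (2 * α)) = 1 / 2 := by field_simp
  simp only [hV, map_sub] at *
  nlinarith [h4, hmul, hmul2, h2, h3, e]
end

section
/- Let N ≥ 1, let x_0, x_1, …, x_N ∈ Q, let δ_0,…,δ_{N−1} ≥ 0, δ̃_0,…,δ̃_{N−1} ≥ 0, and let α_1,…,α_N > 0 satisfy α_{k+1} ≥ 1/(2L) for each k. Suppose for each k = 0,…,N−1 and every x ∈ Q: α_{k+1}·F(x_{k+1}) − α_{k+1}·F(x) ≤ V(x,x_k) − V(x,x_{k+1}) + δ̃_k + 2δ_k·α_{k+1}. Suppose F is convex on Q, x_* ∈ Q minimizes F on Q, V(x_*,x_0) ≤ R², and V(x,y) ≥ 0 for all x,y ∈ Q. Set A_N = Σ_{k=0}^{N−1} α_{k+1} and x̄_N = (1/A_N)·Σ_{k=0}^{N−1} α_{k+1}·x_{k+1}. Then F(x̄_N) − F(x_*) ≤ 2LR²/N + (2L/N)·Σ_{k=0}^{N−1}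 δ̃_k + (2/A_N)·Σ_{k=0}^{N−1} α_{k+1}·δ_k. -/
/-- Theorem 1: Convergence of the gradient method with a
`(δ_k, L)`-model oracle and `δ̃_k`-inexact auxiliary minimization:
`F(x̄_N) − F(x_*) ≤ 2LR²/N + (2L/N)·Σ δ̃_k + (2/A_N)·Σ α_{k+1} δ_k`. -/
theorem stmt6 {E : Type*} [NormedAddCommGroup E] [NormedSpace ℝ E]
    (Q : Set E) (hQ : Convex ℝ Q)
    (F : E → ℝ) (hF : ConvexOn ℝ Q F)
    (L R : ℝ) (hL : 0 < L) (hR : 0 < R)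
    (V : E → E → ℝ) (hVpos : ∀ x ∈ Q, ∀ y ∈ Q, 0 ≤ V x y)
    (N : ℕ) (hN : 1 ≤ N)
    (x : ℕ → E) (hx : ∀ k ≤ N, x k ∈ Q)
    (δ δt α : ℕ → ℝ)
    (hδ : ∀ k < N, 0 ≤ δ k) (hδt : ∀ k < N, 0 ≤ δt k)
    (hαpos : ∀ k < N, 0 < α (k + 1)) (hαL : ∀ k < N, 1 / (2 * L) ≤ α (k + 1))
    (hiter : ∀ k < N, ∀ z ∈ Q,
      α (k + 1) * F (x (k + 1)) - α (k + 1) * F z ≤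
        V z (x k) - V z (x (k + 1)) + δt k + 2 * δ k * α (k + 1))
    (xstar : E) (hxstar : xstar ∈ Q) (hmin : ∀ z ∈ Q, F xstar ≤ F z)
    (hR2 : V xstar (x 0) ≤ R ^ 2)
    (A : ℝ) (hA : A = ∑ k ∈ Finset.range N, α (k + 1))
    (xbar : E) (hxbar : xbar = (1 / A) • ∑ k ∈ Finset.range N, α (k + 1) • x (k + 1)) :
    F xbar - F xstar ≤ 2 * L * R ^ 2 / N + (2 * L / N) * ∑ k ∈ Finset.range N, δt k
      + (2 / A) * ∑ k ∈ Finset.range N, α (k + 1) * δ k := by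
  have hNpos : (0 : ℝ) < N := by exact_mod_cast hN
  have hApos : 0 < A := by
    rw [hA]
    exact Finset.sum_pos (fun k hk => hαpos k (Finset.mem_range.mp hk))
      ⟨0, Finset.mem_range.mpr hN⟩
  -- A ≥ N/(2L)
  have hAge : (N : ℝ) / (2 * L) ≤ A := by
    rw [hA]
    calc (N : ℝ) / (2 * L) = ∑ _k ∈ Finset.range N, 1 / (2 * L) := by
          rw [Finset.sum_const, Finset.card_range, nsmul_eq_mul]; ring
      _ ≤ ∑ k ∈ Finset.range N, α (k + 1) :=
          Finset.sum_le_sum fun k hk => hαL k (Finset.mem_range.mp hk)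
  -- Sum the iteration inequalities at z = xstar
  have hsum : (∑ k ∈ Finset.range N, α (k + 1) * F (x (k + 1))) - A * F xstar ≤
      R ^ 2 + (∑ k ∈ Finset.range N, δt k) + 2 * ∑ k ∈ Finset.range N, α (k + 1) * δ k := by
    have h1 : ∑ k ∈ Finset.range N,
        (α (k + 1) * F (x (k + 1)) - α (k + 1) * F xstar) ≤
        ∑ k ∈ Finset.range N,
          ((V xstar (x k) - V xstar (x (k + 1))) + δt k + 2 * δ k * α (k + 1)) :=
      Finset.sum_le_sum fun k hk => hiter k (Finset.mem_range.mp hk) xstar hxstar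
    have htel : ∑ k ∈ Finset.range N, (V xstar (x k) - V xstar (x (k + 1))) =
        V xstar (x 0) - V xstar (x N) := Finset.sum_range_sub' (fun k => V xstar (x k)) N
    have h2 : 0 ≤ V xstar (x N) := hVpos xstar hxstar (x N) (hx N le_rfl)
    rw [Finset.sum_sub_distrib, ← Finset.sum_mul, ← hA] at h1
    rw [Finset.sum_add_distrib, Finset.sum_add_distrib, htel] at h1
    have h3 : ∑ k ∈ Finset.range N, 2 * δ k * α (k + 1) =
        2 * ∑ k ∈ Finset.range N, α (k + 1) * δ k := by
      rw [Finset.mul_sum]; exact Finset.sum_congr rfl fun k _ => by ring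
    rw [h3] at h1
    calc (∑ k ∈ Finset.range N, α (k + 1) * F (x (k + 1))) - A * F xstar
        ≤ V xstar (x 0) - V xstar (x N) + (∑ k ∈ Finset.range N, δt k)
          + 2 * ∑ k ∈ Finset.range N, α (k + 1) * δ k := h1
      _ ≤ R ^ 2 + (∑ k ∈ Finset.range N, δt k)
          + 2 * ∑ k ∈ Finset.range N, α (k + 1) * δ k := by
          have := hR2; linarith
  -- Jensen: F xbar ≤ (1/A) * Σ α F(x_{k+1})
  have hJ : A * F xbar ≤ ∑ k ∈ Finset.range N, α (k + 1) * F (x (k + 1)) := by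
    have hcm : xbar = (Finset.range N).centerMass (fun k => α (k + 1))
        (fun k => x (k + 1)) := by
      rw [hxbar, Finset.centerMass, ← hA, one_div]
    have := hF.map_centerMass_le (t := Finset.range N)
      (w := fun k => α (k + 1)) (p := fun k => x (k + 1))
      (fun k hk => (hαpos k (Finset.mem_range.mp hk)).le)
      (by rw [← hA]; exact hApos)
      (fun k hk => hx (k + 1) (Finset.mem_range.mp hk))
    rw [← hcm] at this
    have h2 : (Finset.range N).centerMass (fun k => α (k + 1))
        (F ∘ fun k => x (k + 1)) =
        (1 / A) * ∑ k ∈ Finset.range N, α (k + 1) * F (x (k + 1)) := by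
      rw [Finset.centerMass, ← hA, one_div, smul_eq_mul]
      rfl
    rw [h2] at this
    calc A * F xbar ≤ A * ((1 / A) * ∑ k ∈ Finset.range N, α (k + 1) * F (x (k + 1))) :=
          by exact mul_le_mul_of_nonneg_left this hApos.le
      _ = ∑ k ∈ Finset.range N, α (k + 1) * F (x (k + 1)) := by
          field_simp
  -- Combine
  have hkey : A * (F xbar - F xstar) ≤
      R ^ 2 + (∑ k ∈ Finset.range N, δt k) + 2 * ∑ k ∈ Finset.range N, α (k + 1) * δ k := by
    nlinarith [hJ, hsum]
  have hdiv : F xbar - F xstar ≤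
      (R ^ 2 + ∑ k ∈ Finset.range N, δt k) / A
        + (2 / A) * ∑ k ∈ Finset.range N, α (k + 1) * δ k := by
    have h1 : F xbar - F xstar ≤
        (R ^ 2 + (∑ k ∈ Finset.range N, δt k)
          + 2 * ∑ k ∈ Finset.range N, α (k + 1) * δ k) / A := by
      rw [le_div_iff₀ hApos]
      nlinarith [hkey]
    have h2 : (R ^ 2 + (∑ k ∈ Finset.range N, δt k)
          + 2 * ∑ k ∈ Finset.range N, α (k + 1) * δ k) / A =
        (R ^ 2 + ∑ k ∈ Finset.range N, δt k) / A
          + (2 / A) * ∑ k ∈ Finset.range N, α (k + 1) * δ k := by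
      field_simp
    rw [h2] at h1
    exact h1
  have hinvA : 1 / A ≤ 2 * L / N := by
    rw [div_le_div_iff₀ hApos hNpos]
    calc (1 : ℝ) * N = (N / (2 * L)) * (2 * L) := by field_simp
      _ ≤ A * (2 * L) := by nlinarith [hAge, hL]
      _ = 2 * L * A := mul_comm _ _
  have hnum : 0 ≤ R ^ 2 + ∑ k ∈ Finset.range N, δt k := by
    have : 0 ≤ ∑ k ∈ Finset.range N, δt k :=
      Finset.sum_nonneg fun k hk => hδt k (Finset.mem_range.mp hk)
    positivity
  have hbound : (R ^ 2 + ∑ k ∈ Finset.range N, δt k) / A ≤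
      (2 * L / N) * (R ^ 2 + ∑ k ∈ Finset.range N, δt k) := by
    rw [div_eq_mul_one_div]
    calc (R ^ 2 + ∑ k ∈ Finset.range N, δt k) * (1 / A)
        ≤ (R ^ 2 + ∑ k ∈ Finset.range N, δt k) * (2 * L / N) :=
          mul_le_mul_of_nonneg_left hinvA hnum
      _ = (2 * L / N) * (R ^ 2 + ∑ k ∈ Finset.range N, δt k) := mul_comm _ _
    
  calc F xbar - F xstar ≤ (R ^ 2 + ∑ k ∈ Finset.range N, δt k) / A
        + (2 / A) * ∑ k ∈ Finset.range N, α (k + 1) * δ k := hdiv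
    _ ≤ (2 * L / N) * (R ^ 2 + ∑ k ∈ Finset.range N, δt k)
        + (2 / A) * ∑ k ∈ Finset.range N, α (k + 1) * δ k := by linarith
    _ = 2 * L * R ^ 2 / N + (2 * L / N) * ∑ k ∈ Finset.range N, δt k
        + (2 / A) * ∑ k ∈ Finset.range N, α (k + 1) * δ k := by ring
end

section
/- Let L > 0 and let (α_k)_{k≥0}, (A_k)_{k≥0}, (L_k)_{k≥1} be real sequences with α_0 = 0, A_0 = 0, A_{k+1} = A_k + α_{k+1} for all k ≥ 0, 0 < L_k ≤ 2L for all k ≥ 1, and α_{k+1} = (1 + √(1 + 4·L_{k+1}·A_k))/(2·L_{k+1}) for all k ≥ 0 (the larger root of L_{k+1}·α² = A_k + α, so that A_{k+1} = L_{k+1}·α_{k+1}²). Then for every k ≥ 1: A_k ≥ (k+1)²/(8L). -/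
/-- Lemma 3: For the coefficient sequences of the fast gradient
method, with `α_0 = 0`, `A_0 = 0`, `A_{k+1} = A_k + α_{k+1}`, `0 < L_k ≤ 2L`,
and `α_{k+1}` the larger root of `L_{k+1} α² = A_k + α`, one has
`A_k ≥ (k+1)²/(8L)` for all `k ≥ 1`. -/
theorem stmt7 (L : ℝ) (hL : 0 < L)
    (α A Lc : ℕ → ℝ)
    (hα0 : α 0 = 0) (hA0 : A 0 = 0)
    (hA : ∀ k, A (k + 1) = A k + α (k + 1))
    (hLc : ∀ k ≥ 1, 0 < Lc k ∧ Lc k ≤ 2 * L)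
    (hroot : ∀ k, α (k + 1) =
      (1 + Real.sqrt (1 + 4 * Lc (k + 1) * A k)) / (2 * Lc (k + 1))) :
    ∀ k : ℕ, 1 ≤ k → ((k : ℝ) + 1) ^ 2 / (8 * L) ≤ A k := by
  intro k hk
  induction k with
  | zero => omega
  | succ n ih =>
    rcases Nat.lt_or_ge n 1 with h1 | h1
    · -- base case: n = 0
      have hn : n = 0 := by omega
      subst hn
      obtain ⟨hc, hc2⟩ := hLc 1 le_rfl
      have hA1 : A 1 = 1 / Lc 1 := by
        rw [hA 0, hA0, hroot 0, hA0]
        norm_num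
        field_simp
      rw [hA1]
      rw [div_le_div_iff₀ (by positivity) hc]
      norm_num
      nlinarith
    · -- inductive step
      have ihn := ih h1
      obtain ⟨hc, hc2⟩ := hLc (n + 1) (by omega)
      set c := Lc (n + 1) with hcdef
      have hAn : 0 ≤ A n := le_trans (by positivity) ihn
      have hAnlb : ((n : ℝ) + 1) ^ 2 / (8 * L) ≤ A n := ihn
      -- sqrt bound
      have hx : (0 : ℝ) ≤ c * ((n : ℝ) + 1) / (4 * L) := by positivity
      have hsq : Real.sqrt (1 + 4 * c * A n) ≥ 2 * (c * ((n : ℝ) + 1) / (4 * L)) := by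
        rw [ge_iff_le, show (2 : ℝ) * (c * ((n : ℝ) + 1) / (4 * L)) = c * ((n : ℝ) + 1) / (2 * L) by ring]
        rw [Real.le_sqrt (by positivity)]
        have h8 : ((n : ℝ) + 1) ^ 2 ≤ A n * (8 * L) := by
          rw [div_le_iff₀ (by positivity)] at hAnlb; linarith
        rw [div_pow, div_le_iff₀ (by positivity)]
        nlinarith [mul_le_mul_of_nonneg_left h8 (mul_nonneg hc.le hc.le),
          mul_nonneg (mul_nonneg (mul_nonneg hAn hL.le) hc.le) (sub_nonneg.2 hc2)]
        nlinarith [mul_nonneg hc.le hAn]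
      have hα1 : α (n + 1) ≥ ((n : ℝ) + 2) / (4 * L) := by
        rw [hroot n]
        have h1c : 1 / (4 * L) ≤ 1 / (2 * c) := by
          apply div_le_div_of_nonneg_left (by norm_num) (by positivity) (by linarith)
        rw [ge_iff_le, le_div_iff₀ (by positivity)]
        have hnum : 1 + 2 * (c * ((n : ℝ) + 1) / (4 * L)) ≤ 1 + Real.sqrt (1 + 4 * c * A n) := by
          linarith
        have : ((n : ℝ) + 2) / (4 * L) * (2 * c) = 2 * (c * ((n : ℝ) + 1) / (4 * L)) + c / (2 * L) := by
          field_simp; ring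
        rw [this]
        have : c / (2 * L) ≤ 1 := by
          rw [div_le_one (by positivity)]; linarith
        linarith
      -- conclude
      rw [hA n]
      push_cast
      rw [div_le_iff₀ (by positivity)]
      rw [div_le_iff₀ (by positivity)] at hAnlb
      rw [ge_iff_le, div_le_iff₀ (by positivity)] at hα1
      nlinarith [sq_nonneg ((n : ℝ) + 1)]
end

section
/- Let α > 0, A_k ≥ 0, A_{k+1} = A_k + α with A_{k+1} = L₊·α² for some L₊ > 0; let u_k, u_{k+1}, x_k ∈ Q, y = (α·u_k + A_k·x_k)/A_{k+1} and x_{k+1} = (α·u_{k+1} + A_k·x_k)/A_{k+1}; let δ ≥ 0, δ̃ ≥ 0, F : Q → ℝ, F₀ ∈ ℝ, and ψ : E → ℝ convex on Q with: (i) F₀ + ψ(x) ≤ F(x) for all x ∈ Q (left model inequality at y); (ii) F(x_{k+1}) ≤ F₀ + ψ(x_{k+1}) + (L₊/2)‖x_{k+1} − y‖² + 2δ; (iii) V(x,z) ≥ (1/2)‖x − z‖² for all x, z ∈ Q; (iv) there exists a subgradient g of x ↦ α·ψ(x) at u_{k+1} on Q with (g + d′(u_{k+1}) − d′(u_k))(x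 − u_{k+1}) ≥ −δ̃ for all x ∈ Q (u_{k+1} is a δ̃-approximate minimizer of x ↦ V(x,u_k) + α·ψ(x) over Q in the sense of Definition 4). Then for all x ∈ Q: A_{k+1}·F(x_{k+1}) − A_k·F(x_k) + V(x,u_{k+1}) − V(x,u_k) ≤ α·F(x) + 2δ·A_{k+1} + δ̃. -/
/-- Lemma 4: The per-iteration inequality for the fast gradient
method with a `(δ, L)`-model oracle: with `A_{k+1} = A_k + α = L₊ α²`,
`y = (α u_k + A_k x_k)/A_{k+1}`, `x_{k+1} = (α u_{k+1} + A_k x_k)/A_{k+1}`,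
the left model inequality, the accepted step condition, the 1-strong-convexity
lower bound on `V`, and `δ̃`-approximate optimality of `u_{k+1}` for
`x ↦ V(x, u_k) + α ψ(x)`, one has, for all `x ∈ Q`,
`A_{k+1} F(x_{k+1}) − A_k F(x_k) + V(x, u_{k+1}) − V(x, u_k) ≤ α F(x) + 2δ A_{k+1} + δ̃`. -/
theorem stmt8 {E : Type*} [NormedAddCommGroup E] [NormedSpace ℝ E]
    (Q : Set E) (hQ : Convex ℝ Q)
    (d : E → ℝ) (d' : E → (E →L[ℝ] ℝ)) (hd : ∀ x, HasFDerivAt d (d' x) x)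
    (V : E → E → ℝ) (hV : ∀ x y, V x y = d x - d y - d' y (x - y))
    (α Ak Ak1 Lp δ δt : ℝ) (hα : 0 < α) (hAk : 0 ≤ Ak) (hLp : 0 < Lp)
    (hδ : 0 ≤ δ) (hδt : 0 ≤ δt)
    (hrec : Ak1 = Ak + α) (hAL : Ak1 = Lp * α ^ 2)
    (uk uk1 xk : E) (huk : uk ∈ Q) (huk1 : uk1 ∈ Q) (hxk : xk ∈ Q)
    (y : E) (hy : y = Ak1⁻¹ • (α • uk + Ak • xk))
    (xk1 : E) (hxk1 : xk1 = Ak1⁻¹ • (α • uk1 + Ak • xk))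
    (F : E → ℝ) (F₀ : ℝ) (ψ : E → ℝ) (hψ : ConvexOn ℝ Q ψ)
    (hleft : ∀ x ∈ Q, F₀ + ψ x ≤ F x)
    (hstep : F xk1 ≤ F₀ + ψ xk1 + Lp / 2 * ‖xk1 - y‖ ^ 2 + 2 * δ)
    (hVlow : ∀ x ∈ Q, ∀ z ∈ Q, 1/2 * ‖x - z‖ ^ 2 ≤ V x z)
    (g : E →L[ℝ] ℝ)
    (hsub : ∀ x ∈ Q, α * ψ uk1 + g (x - uk1) ≤ α * ψ x)
    (happrox : ∀ x ∈ Q, -δt ≤ g (x - uk1) + d' uk1 (x - uk1) - d' uk (x - uk1)) :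
    ∀ x ∈ Q, Ak1 * F xk1 - Ak * F xk + V x uk1 - V x uk ≤
      α * F x + 2 * δ * Ak1 + δt := by
  intro x hx
  have hAk1 : 0 < Ak1 := by rw [hrec]; linarith
  -- difference of iterates
  have hdiff : xk1 - y = (α / Ak1) • (uk1 - uk) := by
    rw [hxk1, hy, div_eq_mul_inv]
    module
  have hnorm : ‖xk1 - y‖ ^ 2 = (α / Ak1) ^ 2 * ‖uk1 - uk‖ ^ 2 := by
    rw [hdiff, norm_smul, Real.norm_eq_abs, abs_of_pos (div_pos hα hAk1)]
    ring
  have hsq : Lp / 2 * ‖xk1 - y‖ ^ 2 = Ak1⁻¹ * (1/2 * ‖uk1 - uk‖ ^ 2) := by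
    rw [hnorm, hAL]
    field_simp
  have hVuu : 1/2 * ‖uk1 - uk‖ ^ 2 ≤ V uk1 uk := hVlow uk1 huk1 uk huk
  have h1 : F xk1 ≤ F₀ + ψ xk1 + Ak1⁻¹ * V uk1 uk + 2 * δ := by
    have := hstep
    rw [hsq] at this
    have h2 : Ak1⁻¹ * (1/2 * ‖uk1 - uk‖ ^ 2) ≤ Ak1⁻¹ * V uk1 uk :=
      mul_le_mul_of_nonneg_left hVuu (inv_nonneg.mpr hAk1.le)
    linarith
  -- convexity of ψ
  have hxk1eq : xk1 = (α / Ak1) • uk1 + (Ak / Ak1) • xk := by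
    rw [hxk1, div_eq_mul_inv, div_eq_mul_inv]
    module
  have hconv : ψ xk1 ≤ (α / Ak1) * ψ uk1 + (Ak / Ak1) * ψ xk := by
    rw [hxk1eq]
    exact hψ.2 huk1 hxk (div_pos hα hAk1).le (div_nonneg hAk hAk1.le)
      (by field_simp; linarith [hrec])
  -- three point identity
  have h3pt : V x uk - V x uk1 - V uk1 uk = d' uk1 (x - uk1) - d' uk (x - uk1) := by
    have e : x - uk = (x - uk1) + (uk1 - uk) := by abel
    rw [hV, hV, hV, e, map_add]
    ring
  have h3 : α * ψ uk1 + V uk1 uk ≤ α * ψ x + (V x uk - V x uk1) + δt := by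
    have ha := happrox x hx
    have hs := hsub x hx
    linarith [h3pt]
  -- scale inequalities
  have hF1 : Ak1 * F xk1 ≤ Ak1 * F₀ + Ak1 * ψ xk1 + V uk1 uk + 2 * δ * Ak1 := by
    have := mul_le_mul_of_nonneg_left h1 hAk1.le
    have he : Ak1 * (Ak1⁻¹ * V uk1 uk) = V uk1 uk := by
      field_simp
    nlinarith [this]
  have hψ1 : Ak1 * ψ xk1 ≤ α * ψ uk1 + Ak * ψ xk := by
    have := mul_le_mul_of_nonneg_left hconv hAk1.le
    have e1 : Ak1 * ((α / Ak1) * ψ uk1 + (Ak / Ak1) * ψ xk) = α * ψ uk1 + Ak * ψ xk := by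
      field_simp
    rw [e1] at this
    linarith
  have h4 : Ak * (F₀ + ψ xk) ≤ Ak * F xk :=
    mul_le_mul_of_nonneg_left (hleft xk hxk) hAk
  have h5 : α * (F₀ + ψ x) ≤ α * F x :=
    mul_le_mul_of_nonneg_left (hleft x hx) hα.le
  rw [hrec] at hF1 hψ1 ⊢
  linarith [hF1, hψ1, h3, h4, h5]
end

section
/- Let N ≥ 1, let x_0,…,x_N ∈ Q and u_0 = x_0, u_1, …, u_N ∈ Q, let δ_0,…,δ_{N−1} ≥ 0, δ̃_0,…,δ̃_{N−1} ≥ 0, and let 0 = A_0 < A_1 < … < A_N with A_{k+1} = A_k + α_{k+1}. Suppose for each k = 0,…,N−1 and every x ∈ Q: A_{k+1}·F(x_{k+1}) − A_k·F(x_k) + V(x,u_{k+1}) − V(x,u_k) ≤ α_{k+1}·F(x) + 2δ_k·A_{k+1} + δ̃_k. Suppose x_* ∈ Q minimizes F on Q, V(x_*,x_0) ≤ R², V(x,y) ≥ 0 for all x,y ∈ Q, and A_N ≥ (N+1)²/(8L). Then F(x_N) − F(x_*) ≤ 8LR²/(N+1)² + (2/A_N)·Σ_{k=0}^{N−1} δ_k·A_{k+1}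 + 8L·(Σ_{k=0}^{N−1} δ̃_k)/(N+1)². -/
/-- Theorem 2: Convergence of the fast gradient method with a
`(δ_k, L)`-model oracle and `δ̃_k`-inexact auxiliary minimization:
`F(x_N) − F(x_*) ≤ 8LR²/(N+1)² + (2/A_N)·Σ δ_k A_{k+1} + 8L·(Σ δ̃_k)/(N+1)²`. -/
theorem stmt9 {E : Type*} [NormedAddCommGroup E] [NormedSpace ℝ E]
    (Q : Set E) (hQ : Convex ℝ Q)
    (F : E → ℝ) (L R : ℝ) (hL : 0 < L) (hR : 0 < R)
    (V : E → E → ℝ) (hVpos : ∀ x ∈ Q, ∀ y ∈ Q, 0 ≤ V x y)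
    (N : ℕ) (hN : 1 ≤ N)
    (x u : ℕ → E) (hx : ∀ k ≤ N, x k ∈ Q) (hu : ∀ k ≤ N, u k ∈ Q)
    (hu0 : u 0 = x 0)
    (δ δt : ℕ → ℝ) (hδ : ∀ k < N, 0 ≤ δ k) (hδt : ∀ k < N, 0 ≤ δt k)
    (A α : ℕ → ℝ) (hA0 : A 0 = 0)
    (hAmono : ∀ k < N, A k < A (k + 1))
    (hArec : ∀ k < N, A (k + 1) = A k + α (k + 1))
    (hiter : ∀ k < N, ∀ z ∈ Q,
      A (k + 1) * F (x (k + 1)) - A k * F (x k) + V z (u (k + 1)) - V z (u k) ≤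
        α (k + 1) * F z + 2 * δ k * A (k + 1) + δt k)
    (xstar : E) (hxstar : xstar ∈ Q) (hmin : ∀ z ∈ Q, F xstar ≤ F z)
    (hR2 : V xstar (x 0) ≤ R ^ 2)
    (hAN : ((N : ℝ) + 1) ^ 2 / (8 * L) ≤ A N) :
    F (x N) - F xstar ≤ 8 * L * R ^ 2 / ((N : ℝ) + 1) ^ 2
      + (2 / A N) * ∑ k ∈ Finset.range N, δ k * A (k + 1)
      + 8 * L * (∑ k ∈ Finset.range N, δt k) / ((N : ℝ) + 1) ^ 2 := by

  have hN1 : (0:ℝ) < ((N:ℝ)+1)^2 := by positivity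
  have hANpos : 0 < A N := lt_of_lt_of_le (by positivity) hAN
  set S := ∑ k ∈ Finset.range N, δ k * A (k + 1) with hS
  set T := ∑ k ∈ Finset.range N, δt k with hT
  have hTpos : 0 ≤ T := Finset.sum_nonneg fun k hk => hδt k (Finset.mem_range.mp hk)
  have hsum : ∑ k ∈ Finset.range N,
      ((A (k+1) * F (x (k+1)) - A k * F (x k)) + (V xstar (u (k+1)) - V xstar (u k))) ≤
      ∑ k ∈ Finset.range N, (α (k+1) * F xstar + (2 * δ k * A (k+1) + δt k)) := by
    refine Finset.sum_le_sum fun k hk => ?_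
    have := hiter k (Finset.mem_range.mp hk) xstar hxstar
    linarith
  have hL1 : ∑ k ∈ Finset.range N,
      ((A (k+1) * F (x (k+1)) - A k * F (x k)) + (V xstar (u (k+1)) - V xstar (u k)))
      = (A N * F (x N) - A 0 * F (x 0)) + (V xstar (u N) - V xstar (u 0)) := by
    rw [Finset.sum_add_distrib, Finset.sum_range_sub (fun k => A k * F (x k)),
      Finset.sum_range_sub (fun k => V xstar (u k))]
  have hα : ∑ k ∈ Finset.range N, α (k+1) = A N := by
    have : ∑ k ∈ Finset.range N, α (k+1) = ∑ k ∈ Finset.range N, (A (k+1) - A k) := by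
      refine Finset.sum_congr rfl fun k hk => ?_
      have := hArec k (Finset.mem_range.mp hk)
      linarith
    rw [this, Finset.sum_range_sub, hA0, sub_zero]
  have hR1 : ∑ k ∈ Finset.range N, (α (k+1) * F xstar + (2 * δ k * A (k+1) + δt k))
      = A N * F xstar + (2 * S + T) := by
    rw [Finset.sum_add_distrib, ← Finset.sum_mul, hα, Finset.sum_add_distrib,
      hS, hT, Finset.mul_sum]
    ring_nf
  rw [hL1, hR1] at hsum
  have hVN : 0 ≤ V xstar (u N) := hVpos _ hxstar _ (hu N le_rfl)
  have hV0 : V xstar (u 0) ≤ R ^ 2 := by rw [hu0]; exact hR2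
  have key : A N * (F (x N) - F xstar) ≤ R ^ 2 + 2 * S + T := by
    rw [hA0] at hsum; nlinarith
  have hdiv : F (x N) - F xstar ≤ (R ^ 2 + 2 * S + T) / A N := by
    rw [le_div_iff₀ hANpos]; nlinarith
  have hinv : 1 / A N ≤ 8 * L / ((N:ℝ)+1)^2 := by
    rw [div_le_div_iff₀ hANpos hN1, one_mul]
    have h := (div_le_iff₀ (by positivity : (0:ℝ) < 8*L)).mp hAN
    nlinarith
  calc F (x N) - F xstar ≤ (R ^ 2 + 2 * S + T) / A N := hdiv
  _ = R ^ 2 * (1 / A N) + (2 / A N) * S + T * (1 / A N) := by ring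
  _ ≤ R ^ 2 * (8 * L / ((N:ℝ)+1)^2) + (2 / A N) * S + T * (8 * L / ((N:ℝ)+1)^2) := by
      gcongr <;> positivity
  _ = 8 * L * R ^ 2 / ((N:ℝ)+1)^2 + (2 / A N) * S + 8 * L * T / ((N:ℝ)+1)^2 := by ring
end

section
/- Let N ≥ 1, δ ≥ 0, δ̃ ≥ 0, let x_0,…,x_N ∈ Q and α_1,…,α_N > 0 with α_{k+1} ≥ 1/(2L), and suppose for each k = 0,…,N−1 and every x ∈ Q: α_{k+1}·F(x_{k+1}) − α_{k+1}·F(x) ≤ V(x,x_k) − V(x,x_{k+1}) + δ̃ + 2δ·α_{k+1}. Suppose F is convex on Q, x_* ∈ Q minimizes F on Q, V(x_*,x_0) ≤ R², and V ≥ 0. Then with A_N = Σ_{k=0}^{N−1} α_{k+1} and x̄_N = (1/A_N)·Σ_{k=0}^{N−1} α_{k+1}·x_{k+1}: F(x̄_N) − F(x_*) ≤ 2LR²/N + 2L·δ̃ + 2δ. -/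
/-- The gradient-method bound with constant oracle error `δ` per
iteration and constant inexactness `δ̃` of the auxiliary subproblem:
`F(x̄_N) − F(x_*) ≤ 2LR²/N + 2Lδ̃ + 2δ`. -/
theorem stmt10 {E : Type*} [NormedAddCommGroup E] [NormedSpace ℝ E]
    (Q : Set E) (hQ : Convex ℝ Q)
    (F : E → ℝ) (hF : ConvexOn ℝ Q F)
    (L R : ℝ) (hL : 0 < L) (hR : 0 < R)
    (V : E → E → ℝ) (hVpos : ∀ x ∈ Q, ∀ y ∈ Q, 0 ≤ V x y)
    (N : ℕ) (hN : 1 ≤ N) (δ δt : ℝ) (hδ : 0 ≤ δ) (hδt : 0 ≤ δt)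
    (x : ℕ → E) (hx : ∀ k ≤ N, x k ∈ Q)
    (α : ℕ → ℝ)
    (hαpos : ∀ k < N, 0 < α (k + 1)) (hαL : ∀ k < N, 1 / (2 * L) ≤ α (k + 1))
    (hiter : ∀ k < N, ∀ z ∈ Q,
      α (k + 1) * F (x (k + 1)) - α (k + 1) * F z ≤
        V z (x k) - V z (x (k + 1)) + δt + 2 * δ * α (k + 1))
    (xstar : E) (hxstar : xstar ∈ Q) (hmin : ∀ z ∈ Q, F xstar ≤ F z)
    (hR2 : V xstar (x 0) ≤ R ^ 2)
    (A : ℝ) (hA : A = ∑ k ∈ Finset.range N, α (k + 1))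
    (xbar : E) (hxbar : xbar = (1 / A) • ∑ k ∈ Finset.range N, α (k + 1) • x (k + 1)) :
    F xbar - F xstar ≤ 2 * L * R ^ 2 / N + 2 * L * δt + 2 * δ := by
  have hNpos : (0:ℝ) < N := by exact_mod_cast hN
  have hApos : 0 < A := by
    rw [hA]
    apply Finset.sum_pos (fun k hk => hαpos k (Finset.mem_range.mp hk))
    exact ⟨0, Finset.mem_range.mpr hN⟩
  have hAge : N / (2 * L) ≤ A := by
    rw [hA]
    calc (N : ℝ) / (2 * L) = ∑ k ∈ Finset.range N, 1 / (2 * L) := by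
          rw [Finset.sum_const, Finset.card_range, nsmul_eq_mul, mul_one_div]
      _ ≤ _ := Finset.sum_le_sum fun k hk => hαL k (Finset.mem_range.mp hk)
  -- Jensen
  have hcm : xbar = (Finset.range N).centerMass (fun k => α (k + 1)) (fun k => x (k + 1)) := by
    rw [hxbar, Finset.centerMass, ← hA, one_div]
  have hjensen : F xbar ≤ (1 / A) * ∑ k ∈ Finset.range N, α (k + 1) * F (x (k + 1)) := by
    rw [hcm]
    have := hF.map_centerMass_le (t := Finset.range N) (w := fun k => α (k + 1))
      (p := fun k => x (k + 1)) (fun k hk => (hαpos k (Finset.mem_range.mp hk)).le)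
      (hA ▸ hApos) (fun k hk => hx (k + 1) (Finset.mem_range.mp hk))
    simpa [Finset.centerMass, ← hA, one_div, Function.comp, smul_eq_mul] using this
  -- summed iteration bound
  have hsum : ∑ k ∈ Finset.range N, α (k + 1) * F (x (k + 1)) - A * F xstar ≤
      R ^ 2 + N * δt + 2 * δ * A := by
    have h1 : ∑ k ∈ Finset.range N,
        (α (k + 1) * F (x (k + 1)) - α (k + 1) * F xstar) ≤
        ∑ k ∈ Finset.range N,
        (V xstar (x k) - V xstar (x (k + 1)) + δt + 2 * δ * α (k + 1)) :=
      Finset.sum_le_sum fun k hk => hiter k (Finset.mem_range.mp hk) xstar hxstar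
    have htel : ∑ k ∈ Finset.range N, (V xstar (x k) - V xstar (x (k + 1))) =
        V xstar (x 0) - V xstar (x N) := by
      have := Finset.sum_range_sub' (fun k => V xstar (x k)) N
      simpa using this
    have hVN : 0 ≤ V xstar (x N) := hVpos _ hxstar _ (hx N le_rfl)
    calc ∑ k ∈ Finset.range N, α (k + 1) * F (x (k + 1)) - A * F xstar
        = ∑ k ∈ Finset.range N, (α (k + 1) * F (x (k + 1)) - α (k + 1) * F xstar) := by
          rw [hA, Finset.sum_sub_distrib, Finset.sum_mul]
      _ ≤ ∑ k ∈ Finset.range N,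
            (V xstar (x k) - V xstar (x (k + 1)) + δt + 2 * δ * α (k + 1)) := h1
      _ = (V xstar (x 0) - V xstar (x N)) + N * δt + 2 * δ * A := by
          rw [hA]
          simp only [Finset.sum_add_distrib, htel, Finset.sum_const, Finset.card_range,
            Finset.mul_sum]
          push_cast; ring
      _ ≤ R ^ 2 + N * δt + 2 * δ * A := by linarith
  have key : F xbar - F xstar ≤ (R ^ 2 + N * δt) / A + 2 * δ := by
    have h2 : A * (F xbar - F xstar) ≤ R ^ 2 + N * δt + 2 * δ * A := by
      have h3 : A * F xbar ≤ ∑ k ∈ Finset.range N, α (k + 1) * F (x (k + 1)) := by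
        have := mul_le_mul_of_nonneg_left hjensen hApos.le
        rwa [← mul_assoc, mul_one_div, div_self hApos.ne', one_mul] at this
      nlinarith
    have h4 : F xbar - F xstar ≤ (R ^ 2 + N * δt + 2 * δ * A) / A :=
      (le_div_iff₀ hApos).mpr (by linarith)
    rw [add_div, mul_div_assoc, div_self hApos.ne', mul_one] at h4
    exact h4
  have hdivle : (R ^ 2 + N * δt) / A ≤ 2 * L * R ^ 2 / N + 2 * L * δt := by
    have hnum : 0 ≤ R ^ 2 + N * δt := by positivity
    have h4 : (R ^ 2 + N * δt) / A ≤ (R ^ 2 + N * δt) / (N / (2 * L)) := by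
      apply div_le_div_of_nonneg_left hnum (by positivity) hAge
    calc (R ^ 2 + N * δt) / A ≤ (R ^ 2 + N * δt) / (N / (2 * L)) := h4
      _ = 2 * L * R ^ 2 / N + 2 * L * δt := by
          field_simp
  linarith
end

section
/- Let N ≥ 1, δ ≥ 0, δ̃ ≥ 0, let x_0,…,x_N ∈ Q and u_0 = x_0, u_1,…,u_N ∈ Q, and let 0 = A_0 < A_1 < … < A_N with A_{k+1} = A_k + α_{k+1} and A_N ≥ (N+1)²/(8L). Suppose for each k = 0,…,N−1 and every x ∈ Q: A_{k+1}·F(x_{k+1}) − A_k·F(x_k) + V(x,u_{k+1}) − V(x,u_k) ≤ α_{k+1}·F(x) + 2δ·A_{k+1} + δ̃. Suppose x_* ∈ Q minimizes F on Q, V(x_*,x_0) ≤ R², and V ≥ 0. Then F(x_N) − F(x_*) ≤ 8LR²/(N+1)² + 8L·δ̃/(N+1) + 2N·δ. -/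
/-- The fast-gradient-method bound with constant oracle error `δ`
per iteration and constant inexactness `δ̃` of the auxiliary subproblem:
`F(x_N) − F(x_*) ≤ 8LR²/(N+1)² + 8Lδ̃/(N+1) + 2Nδ`. -/
theorem stmt11 {E : Type*} [NormedAddCommGroup E] [NormedSpace ℝ E]
    (Q : Set E) (hQ : Convex ℝ Q)
    (F : E → ℝ) (L R : ℝ) (hL : 0 < L) (hR : 0 < R)
    (V : E → E → ℝ) (hVpos : ∀ x ∈ Q, ∀ y ∈ Q, 0 ≤ V x y)
    (N : ℕ) (hN : 1 ≤ N) (δ δt : ℝ) (hδ : 0 ≤ δ) (hδt : 0 ≤ δt)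
    (x u : ℕ → E) (hx : ∀ k ≤ N, x k ∈ Q) (hu : ∀ k ≤ N, u k ∈ Q)
    (hu0 : u 0 = x 0)
    (A α : ℕ → ℝ) (hA0 : A 0 = 0)
    (hAmono : ∀ k < N, A k < A (k + 1))
    (hArec : ∀ k < N, A (k + 1) = A k + α (k + 1))
    (hAN : ((N : ℝ) + 1) ^ 2 / (8 * L) ≤ A N)
    (hiter : ∀ k < N, ∀ z ∈ Q,
      A (k + 1) * F (x (k + 1)) - A k * F (x k) + V z (u (k + 1)) - V z (u k) ≤
        α (k + 1) * F z + 2 * δ * A (k + 1) + δt)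
    (xstar : E) (hxstar : xstar ∈ Q) (hmin : ∀ z ∈ Q, F xstar ≤ F z)
    (hR2 : V xstar (x 0) ≤ R ^ 2) :
    F (x N) - F xstar ≤ 8 * L * R ^ 2 / ((N : ℝ) + 1) ^ 2
      + 8 * L * δt / ((N : ℝ) + 1) + 2 * N * δ := by
  -- A is monotone up to N
  have hmonole : ∀ j ≤ N, ∀ i ≤ j, A i ≤ A j := by
    intro j hj
    induction j with
    | zero => intro i hi; interval_cases i; rfl
    | succ n ih =>
      intro i hi
      rcases Nat.lt_or_ge i (n + 1) with h | h
      · exact le_trans (ih (le_trans (Nat.le_succ n) hj) i (Nat.lt_succ_iff.mp h))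
          (le_of_lt (hAmono n (Nat.lt_of_succ_le hj)))
      · have : i = n + 1 := le_antisymm hi h
        subst this; rfl
  have hANpos : 0 < A N := by
    calc (0:ℝ) < ((N:ℝ)+1)^2 / (8*L) := by positivity
    _ ≤ A N := hAN
  -- telescoping
  have key : ∀ n ≤ N,
      A n * F (x n) - A n * F xstar + V xstar (u n) - V xstar (u 0) ≤
        2 * δ * (∑ k ∈ Finset.range n, A (k + 1)) + n * δt := by
    intro n hn
    induction n with
    | zero => simp [hA0]
    | succ m ih =>
      have hmN : m < N := Nat.lt_of_succ_le hn
      have ihm := ih (le_of_lt hmN)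
      have hit := hiter m hmN xstar hxstar
      have hα : α (m + 1) = A (m + 1) - A m := by
        have := hArec m hmN; linarith
      rw [Finset.sum_range_succ]
      push_cast
      rw [hα] at hit
      nlinarith [hit, ihm]
  have hmain := key N le_rfl
  have hS : (∑ k ∈ Finset.range N, A (k + 1)) ≤ N * A N := by
    calc (∑ k ∈ Finset.range N, A (k + 1)) ≤ ∑ k ∈ Finset.range N, A N := by
          apply Finset.sum_le_sum
          intro k hk
          exact hmonole N le_rfl (k + 1) (Nat.succ_le_of_lt (Finset.mem_range.mp hk))
      _ = N * A N := by simp [Finset.sum_const, mul_comm]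
  have hVN : 0 ≤ V xstar (u N) := hVpos xstar hxstar (u N) (hu N le_rfl)
  have hV0 : V xstar (u 0) ≤ R ^ 2 := by rw [hu0]; exact hR2
  -- A N * (F (x N) - F xstar) ≤ R² + 2δ N A N + N δ̃
  have h1 : A N * (F (x N) - F xstar) ≤ R ^ 2 + 2 * δ * (N * A N) + N * δt := by
    have h2 : 2 * δ * (∑ k ∈ Finset.range N, A (k + 1)) ≤ 2 * δ * (N * A N) :=
      mul_le_mul_of_nonneg_left hS (by positivity)
    nlinarith [hmain, h2]
  have h3 : F (x N) - F xstar ≤ R ^ 2 / A N + 2 * δ * N + N * δt / A N := by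
    have heq : R ^ 2 / A N + 2 * δ * N + N * δt / A N
        = (R ^ 2 + 2 * δ * ((N:ℝ) * A N) + N * δt) / A N := by
      field_simp
    rw [heq, le_div_iff₀ hANpos]
    nlinarith [h1]
  have hNpos : (0:ℝ) < (N:ℝ) + 1 := by positivity
  have hAinv : R ^ 2 / A N ≤ 8 * L * R ^ 2 / ((N:ℝ) + 1) ^ 2 := by
    rw [div_le_div_iff₀ hANpos (by positivity)]
    have : ((N:ℝ)+1)^2 ≤ 8 * L * A N := by
      rw [div_le_iff₀ (by positivity)] at hAN; linarith
    nlinarith [sq_nonneg R]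
  have hδtb : N * δt / A N ≤ 8 * L * δt / ((N:ℝ) + 1) := by
    rw [div_le_div_iff₀ hANpos hNpos]
    have h8 : ((N:ℝ)+1)^2 ≤ 8 * L * A N := by
      rw [div_le_iff₀ (by positivity)] at hAN; linarith
    have hNle : (N:ℝ) ≤ (N:ℝ) + 1 := by linarith
    have : (N:ℝ) * δt * ((N:ℝ)+1) ≤ δt * ((N:ℝ)+1)^2 := by nlinarith
    nlinarith
  calc F (x N) - F xstar ≤ R ^ 2 / A N + 2 * δ * N + N * δt / A N := h3
    _ ≤ 8 * L * R ^ 2 / ((N:ℝ) + 1) ^ 2 + 8 * L * δt / ((N:ℝ) + 1) + 2 * N * δ := by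
        have := hAinv; have := hδtb; linarith
end

section
/- Let F : E → ℝ be convex and differentiable on a convex set Q ⊆ E, let ν ∈ [0,1] and L_ν > 0, and suppose the gradient of F satisfies the Hölder condition ‖∇F(x) − ∇F(y)‖ ≤ L_ν·‖x − y‖^ν for all x, y ∈ Q. Then for every δ > 0 and all x, y ∈ Q: 0 ≤ F(x) − F(y) − ⟨∇F(y), x − y⟩ ≤ (L(δ)/2)·‖x − y‖² + δ, where L(δ) = L_ν·( (L_ν/(2δ))·((1−ν)/(1+ν)) )^{(1−ν)/(1+ν)} (with the convention that the factor equals 1 when ν = 1). -/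
section YoungAux
open Real

lemma young_aux {ν Lν δ T : ℝ} (hν0 : 0 ≤ ν) (hν1 : ν ≤ 1) (hL : 0 < Lν) (hδ : 0 < δ)
    (hT : 0 ≤ T) :
    Lν * (T ^ ν * T) / (1 + ν) ≤
      Lν * ((Lν / (2 * δ)) * ((1 - ν) / (1 + ν))) ^ ((1 - ν) / (1 + ν)) / 2 * T ^ 2 + δ := by
  have h1ν : (0:ℝ) < 1 + ν := by linarith
  rcases eq_or_lt_of_le hν1 with hEq | hlt
  · -- ν = 1
    rw [hEq]
    norm_num [Real.rpow_one]
    nlinarith [sq_nonneg T]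
  · -- ν < 1
    have h1ν' : (0:ℝ) < 1 - ν := by linarith
    set κ : ℝ := (1 - ν) / (1 + ν) with hκdef
    set M : ℝ := Lν / (2 * δ) * κ with hMdef
    have hκ : 0 < κ := div_pos h1ν' h1ν
    have hM : 0 < M := mul_pos (div_pos hL (by linarith)) hκ
    set β : ℝ := M ^ κ with hβdef
    have hβ : 0 < β := rpow_pos_of_pos hM κ
    rcases eq_or_lt_of_le hT with hT0 | hTpos
    · -- T = 0
      rw [← hT0]
      have h1 : Lν * ((0:ℝ) ^ ν * 0) / (1 + ν) = 0 := by ring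
      rw [h1]
      have h2 : 0 ≤ Lν * β / 2 * (0:ℝ) ^ 2 := by positivity
      linarith
    · set p : ℝ := 2 / (1 + ν) with hpdef
      set q : ℝ := 2 / (1 - ν) with hqdef
      have hp : 0 < p := by positivity
      have hq : 0 < q := by positivity
      have hpq : p.HolderConjugate q := by
        constructor
        · rw [hpdef, hqdef, inv_div, inv_div]; ring
        · exact hp
        · exact hq
      set a : ℝ := (β * T ^ 2) ^ (1 / p) with hadef
      set b : ℝ := β ^ (-(1 / p)) with hbdef
      have ha : 0 ≤ a := rpow_nonneg (by positivity) _
      have hb : 0 ≤ b := rpow_nonneg hβ.le _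
      have hy := Real.young_inequality_of_nonneg ha hb hpq
      have hap : a ^ p = β * T ^ 2 := by
        rw [hadef, ← rpow_mul (by positivity), one_div_mul_cancel hp.ne', rpow_one]
      have h2p : (2:ℝ) * (1 / p) = ν + 1 := by
        rw [hpdef]; field_simp; ring
      have hT2 : ((T ^ 2 : ℝ)) ^ (1 / p) = T ^ ν * T := by
        have h22 : (T ^ 2 : ℝ) = T ^ (2:ℝ) := by
          rw [← rpow_natCast T 2]; norm_num
        rw [h22, ← rpow_mul hT, h2p, rpow_add hTpos, rpow_one]
      have hab : a * b = T ^ ν * T := by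
        rw [hadef, hbdef, mul_rpow hβ.le (by positivity)]
        rw [mul_comm (β ^ (1/p)) _, mul_assoc, ← rpow_add hβ, add_neg_cancel, rpow_zero,
          mul_one, hT2]
      have hbq : b ^ q = M⁻¹ := by
        rw [hbdef, hβdef, ← rpow_mul hM.le, ← rpow_mul hM.le]
        have he : κ * -(1 / p) * q = -1 := by
          rw [hκdef, hpdef, hqdef]; field_simp
        rw [he, rpow_neg_one]
      have hMinv : M⁻¹ = 2 * δ * (1 + ν) / (Lν * (1 - ν)) := by
        rw [hMdef, hκdef]; field_simp
      calc Lν * (T ^ ν * T) / (1 + ν) = Lν / (1 + ν) * (a * b) := by rw [hab]; ring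
        _ ≤ Lν / (1 + ν) * (a ^ p / p + b ^ q / q) :=
            mul_le_mul_of_nonneg_left hy (by positivity)
        _ = Lν * β / 2 * T ^ 2 + δ := by
            rw [hap, hbq, hMinv, hpdef, hqdef]
            field_simp

end YoungAux

/-- A convex function with `ν`-Hölder-continuous gradient on `Q`
furnishes a `(δ, L(δ))`-oracle for every `δ > 0`, where
`L(δ) = L_ν · ((L_ν/(2δ))·((1−ν)/(1+ν)))^{(1−ν)/(1+ν)}` (real-power convention
gives the factor `1` when `ν = 1`). -/
theorem stmt12 {E : Type*} [NormedAddCommGroup E] [InnerProductSpace ℝ E]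
    (Q : Set E) (hQ : Convex ℝ Q)
    (F : E → ℝ) (hF : ConvexOn ℝ Q F)
    (F' : E → E) (hder : ∀ y ∈ Q, HasFDerivAt F (innerSL ℝ (F' y)) y)
    (ν Lν : ℝ) (hν : ν ∈ Set.Icc (0:ℝ) 1) (hLν : 0 < Lν)
    (hHolder : ∀ x ∈ Q, ∀ y ∈ Q, ‖F' x - F' y‖ ≤ Lν * ‖x - y‖ ^ ν)
    (δ : ℝ) (hδ : 0 < δ) :
    ∀ x ∈ Q, ∀ y ∈ Q,
      0 ≤ F x - F y - (inner ℝ (F' y) (x - y) : ℝ) ∧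
      F x - F y - (inner ℝ (F' y) (x - y) : ℝ) ≤
        Lν * ((Lν / (2 * δ)) * ((1 - ν) / (1 + ν))) ^ ((1 - ν) / (1 + ν)) / 2
          * ‖x - y‖ ^ 2 + δ := by
  obtain ⟨hν0, hν1⟩ := hν
  intro x hx y hy
  set v : E := x - y with hvdef
  set z : ℝ → E := fun t => y + t • v with hzdef
  set φ : ℝ → ℝ := fun t => F (z t) with hφdef
  set g : ℝ → ℝ := fun t => (inner ℝ (F' (z t)) v : ℝ) with hgdef
  set c : ℝ := (inner ℝ (F' y) v : ℝ) with hcdef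
  have hz0 : z 0 = y := by simp [hzdef]
  have hz1 : z 1 = x := by simp [hzdef, hvdef]
  have hzQ : ∀ t ∈ Set.Icc (0:ℝ) 1, z t ∈ Q := by
    intro t ht
    have h := hQ hy hx (by linarith [ht.2] : (0:ℝ) ≤ 1 - t) ht.1 (by ring)
    have he : z t = (1 - t) • y + t • x := by rw [hzdef, hvdef]; module
    rw [he]; exact h
  have hderiv : ∀ t ∈ Set.Icc (0:ℝ) 1, HasDerivAt φ (g t) t := by
    intro t ht
    have hzt : HasDerivAt z v t := by
      have h := ((hasDerivAt_id t).smul_const v).const_add y; rw [one_smul] at h; exact h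
    have := (hder _ (hzQ t ht)).comp_hasDerivAt t hzt
    exact this
  have hg0 : g 0 = c := by rw [hgdef, hcdef]; simp [hz0]
  -- lower bound
  have hlower : c ≤ F x - F y := by
    have h0 : HasDerivAt φ c 0 := hg0 ▸ hderiv 0 ⟨le_refl 0, zero_le_one⟩
    have htend := hasDerivAt_iff_tendsto_slope.1 h0
    have htend' : Filter.Tendsto (slope φ 0) (nhdsWithin 0 (Set.Ioi 0)) (nhds c) :=
      htend.mono_left (nhdsWithin_mono 0 (fun t ht => ne_of_gt ht))
    refine le_of_tendsto htend' ?_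
    filter_upwards [Ioc_mem_nhdsGT_of_mem ⟨le_refl (0:ℝ), zero_lt_one⟩] with t ht
    have hcv := hF.2 hy hx (by linarith [ht.2] : (0:ℝ) ≤ 1 - t) ht.1.le (by ring)
    have he : (1 - t) • y + t • x = z t := by rw [hzdef, hvdef]; module
    rw [he] at hcv
    rw [slope_def_field]
    rw [div_le_iff₀ (by simpa using ht.1)]
    have hφ0 : φ 0 = F y := by show F (z 0) = F y; rw [hz0]
    have hφt : φ t ≤ (1 - t) * F y + t * F x := hcv
    simp only [sub_zero]
    nlinarith [hφt, hφ0]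
  -- integrability
  have hgderiv : Set.EqOn g (deriv φ) (Set.Icc 0 1) := fun t ht => ((hderiv t ht).deriv).symm
  have hmeas : Measurable (deriv φ) := measurable_deriv φ
  set C : ℝ := (‖F' y‖ + Lν * ‖v‖ ^ ν) * ‖v‖ with hCdef
  have hgbound : ∀ t ∈ Set.Icc (0:ℝ) 1, ‖g t‖ ≤ C := by
    intro t ht
    have h1 : ‖g t‖ ≤ ‖F' (z t)‖ * ‖v‖ := by
      rw [hgdef]; exact norm_inner_le_norm _ _
    have h2 : ‖F' (z t)‖ ≤ ‖F' y‖ + ‖F' (z t) - F' y‖ := by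
      have := norm_sub_norm_le (F' (z t)) (F' y); linarith
    have h3 : ‖F' (z t) - F' y‖ ≤ Lν * ‖z t - y‖ ^ ν := hHolder _ (hzQ t ht) y hy
    have h4 : ‖z t - y‖ ≤ ‖v‖ := by
      have : z t - y = t • v := by show y + t • v - y = t • v; abel
      rw [this, norm_smul, Real.norm_eq_abs, abs_of_nonneg ht.1]
      nlinarith [norm_nonneg v, ht.2]
    have h5 : ‖z t - y‖ ^ ν ≤ ‖v‖ ^ ν := Real.rpow_le_rpow (norm_nonneg _) h4 hν0
    have h6 : ‖F' (z t)‖ * ‖v‖ ≤ C := by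
      rw [hCdef]
      have : ‖F' (z t)‖ ≤ ‖F' y‖ + Lν * ‖v‖ ^ ν := by nlinarith
      nlinarith [norm_nonneg v]
    linarith
  have hint : IntervalIntegrable g MeasureTheory.volume 0 1 := by
    rw [intervalIntegrable_iff_integrableOn_Ioc_of_le zero_le_one]
    apply MeasureTheory.Integrable.mono' (MeasureTheory.integrable_const C)
    · exact (hmeas.aestronglyMeasurable.restrict).congr
        ((MeasureTheory.ae_restrict_iff' measurableSet_Ioc).2 (MeasureTheory.ae_of_all _
          fun t ht => (hgderiv (Set.Ioc_subset_Icc_self ht)).symm))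
    · exact (MeasureTheory.ae_restrict_iff' measurableSet_Ioc).2 (MeasureTheory.ae_of_all _
        fun t ht => hgbound t (Set.Ioc_subset_Icc_self ht))
  -- FTC
  have hFTC : ∫ t in (0:ℝ)..1, g t = F x - F y := by
    have := intervalIntegral.integral_eq_sub_of_hasDerivAt
      (fun t ht => hderiv t (by rwa [Set.uIcc_of_le zero_le_one] at ht)) hint
    rw [this, hφdef]
    simp [hz0, hz1]
  -- key descent bound
  have hrint : IntervalIntegrable (fun t : ℝ => Lν * t ^ ν * (‖v‖ ^ ν * ‖v‖))
      MeasureTheory.volume 0 1 :=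
    ((intervalIntegral.intervalIntegrable_rpow' (by linarith : (-1:ℝ) < ν)).const_mul Lν).mul_const _
  have hkey : F x - F y - c ≤ Lν * (‖v‖ ^ ν * ‖v‖) / (1 + ν) := by
    have hsub : F x - F y - c = ∫ t in (0:ℝ)..1, (g t - c) := by
      rw [intervalIntegral.integral_sub hint intervalIntegrable_const,
        intervalIntegral.integral_const, hFTC]
      simp
    have hmono : ∫ t in (0:ℝ)..1, (g t - c) ≤
        ∫ t in (0:ℝ)..1, Lν * t ^ ν * (‖v‖ ^ ν * ‖v‖) := by
      apply intervalIntegral.integral_mono_on zero_le_one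
        (hint.sub intervalIntegrable_const) hrint
      intro t ht
      have h1 : g t - c = (inner ℝ (F' (z t) - F' y) v : ℝ) := by
        rw [hgdef, hcdef, inner_sub_left]
      have h2 : (inner ℝ (F' (z t) - F' y) v : ℝ) ≤ ‖F' (z t) - F' y‖ * ‖v‖ :=
        real_inner_le_norm _ _
      have h3 : ‖F' (z t) - F' y‖ ≤ Lν * ‖z t - y‖ ^ ν := hHolder _ (hzQ t ht) y hy
      have h4 : ‖z t - y‖ = t * ‖v‖ := by
        have he : z t - y = t • v := by show y + t • v - y = t • v; abel
        rw [he, norm_smul, Real.norm_eq_abs, abs_of_nonneg ht.1]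
      have h5 : ‖z t - y‖ ^ ν = t ^ ν * ‖v‖ ^ ν := by
        rw [h4, Real.mul_rpow ht.1 (norm_nonneg v)]
      rw [h1]
      calc (inner ℝ (F' (z t) - F' y) v : ℝ) ≤ ‖F' (z t) - F' y‖ * ‖v‖ := h2
        _ ≤ Lν * ‖z t - y‖ ^ ν * ‖v‖ :=
            mul_le_mul_of_nonneg_right h3 (norm_nonneg v)
        _ = Lν * t ^ ν * (‖v‖ ^ ν * ‖v‖) := by rw [h5]; ring
    have hval : ∫ t in (0:ℝ)..1, Lν * t ^ ν * (‖v‖ ^ ν * ‖v‖) =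
        Lν * (‖v‖ ^ ν * ‖v‖) / (1 + ν) := by
      rw [intervalIntegral.integral_mul_const, intervalIntegral.integral_const_mul,
        integral_rpow (Or.inl (by linarith : (-1:ℝ) < ν))]
      rw [Real.one_rpow, Real.zero_rpow (by linarith : ν + 1 ≠ 0)]
      ring
    rw [hsub]
    calc ∫ t in (0:ℝ)..1, (g t - c) ≤ _ := hmono
      _ = _ := hval
  constructor
  · linarith
  · have hy2 := young_aux hν0 hν1 hLν hδ (norm_nonneg v)
    calc F x - F y - c ≤ Lν * (‖v‖ ^ ν * ‖v‖) / (1 + ν) := hkey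
      _ ≤ _ := hy2
end

section
/- Let ν ∈ [0,1], L_ν > 0, ε > 0, and let (α_k)_{k≥0}, (A_k)_{k≥0}, (L_k)_{k≥1} be real sequences with α_0 = 0, A_0 = 0, A_{k+1} = A_k + α_{k+1}, α_{k+1} > 0, A_{k+1} = L_{k+1}·α_{k+1}², and L_{k+1} ≤ 2·L(δ_k) for each k ≥ 0, where δ_k = ε·α_{k+1}/(4·A_{k+1}) and L(δ) = L_ν·( (L_ν/(2δ))·((1−ν)/(1+ν)) )^{(1−ν)/(1+ν)} (with the convention that the factor equals 1 when ν = 1). Then for every N ≥ 1: A_N ≥ N^{(1+3ν)/(1+ν)}·ε^{(1−ν)/(1+ν)} / ( 2^{(2+4ν)/(1+ν)}·L_ν^{2/(1+ν)} ). -/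
open Real

lemma aux_pow_self {p : ℝ} (h1 : 1 ≤ p) (h2 : p ≤ 2) : p ^ p ≤ (4:ℝ) ^ (p-1) := by
  have hp0 : (0:ℝ) < p := by linarith
  have hch := Real.convexOn_mul_log.2 (Set.mem_Ici.2 (by norm_num : (0:ℝ) ≤ 1))
    (Set.mem_Ici.2 (by norm_num : (0:ℝ) ≤ 2))
    (by linarith : (0:ℝ) ≤ 2 - p) (by linarith : (0:ℝ) ≤ p - 1) (by ring)
  simp only [smul_eq_mul, Real.log_one] at hch
  have hpt : (2 - p) * 1 + (p - 1) * 2 = p := by ring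
  rw [hpt] at hch
  have hlog : p * Real.log p ≤ (p - 1) * Real.log 4 := by
    have h4 : Real.log 4 = 2 * Real.log 2 := by
      rw [show (4:ℝ) = 2^2 by norm_num, Real.log_pow]; push_cast; ring
    rw [h4]; nlinarith [hch]
  calc p ^ p = Real.exp (Real.log p * p) := by rw [Real.rpow_def_of_pos hp0]
    _ ≤ Real.exp (Real.log 4 * (p-1)) := by apply Real.exp_le_exp.2; nlinarith [hlog]
    _ = (4:ℝ) ^ (p-1) := by rw [Real.rpow_def_of_pos (by norm_num)]

lemma aux_concave {a b s : ℝ} (ha : 0 ≤ a) (hb : 0 < b)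
    (hs0 : 0 < s) (hs1 : s ≤ 1) : s * (b - a) ≤ b ^ (1-s) * (b ^ s - a ^ s) := by
  have hgm := Real.geom_mean_le_arith_mean2_weighted (by linarith : (0:ℝ) ≤ 1 - s)
    (le_of_lt hs0) hb.le ha (by ring)
  have hb1 : b ^ (1-s) * b ^ s = b := by rw [← Real.rpow_add hb]; simp
  nlinarith [hgm, hb1]


/-- Growth estimate for the coefficient sequence of the universal
fast gradient method: if `α_0 = A_0 = 0`, `A_{k+1} = A_k + α_{k+1}`,
`α_{k+1} > 0`, `A_{k+1} = L_{k+1} α_{k+1}²`, and `L_{k+1} ≤ 2·L(δ_k)` with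
`δ_k = ε α_{k+1}/(4 A_{k+1})` and
`L(δ) = L_ν · ((L_ν/(2δ))·((1−ν)/(1+ν)))^{(1−ν)/(1+ν)}`, then for all `N ≥ 1`,
`A_N ≥ N^{(1+3ν)/(1+ν)} ε^{(1−ν)/(1+ν)} / (2^{(2+4ν)/(1+ν)} L_ν^{2/(1+ν)})`. -/
theorem stmt13 (ν Lν ε : ℝ) (hν : ν ∈ Set.Icc (0:ℝ) 1) (hLν : 0 < Lν)
    (hε : 0 < ε)
    (α A Lc : ℕ → ℝ)
    (hα0 : α 0 = 0) (hA0 : A 0 = 0)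
    (hrec : ∀ k, A (k + 1) = A k + α (k + 1))
    (hαpos : ∀ k, 0 < α (k + 1))
    (hAL : ∀ k, A (k + 1) = Lc (k + 1) * α (k + 1) ^ 2)
    (hLc : ∀ k, Lc (k + 1) ≤ 2 *
      (Lν * ((Lν / (2 * (ε * α (k + 1) / (4 * A (k + 1))))) *
        ((1 - ν) / (1 + ν))) ^ ((1 - ν) / (1 + ν)))) :
    ∀ N : ℕ, 1 ≤ N →
      (N : ℝ) ^ ((1 + 3 * ν) / (1 + ν)) * ε ^ ((1 - ν) / (1 + ν)) /
        ((2 : ℝ) ^ ((2 + 4 * ν) / (1 + ν)) * Lν ^ (2 / (1 + ν))) ≤ A N := by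
  obtain ⟨hν0, hν1⟩ := hν
  have h1ν : (0:ℝ) < 1 + ν := by linarith
  set ρ : ℝ := (1 - ν) / (1 + ν) with hρdef
  have hρ0 : 0 ≤ ρ := div_nonneg (by linarith) h1ν.le
  have hρ1 : ρ ≤ 1 := by rw [hρdef, div_le_one h1ν]; linarith
  set p : ℝ := 2 - ρ with hpdef
  have hp1 : 1 ≤ p := by rw [hpdef]; linarith
  have hp2 : p ≤ 2 := by rw [hpdef]; linarith
  have hp0 : (0:ℝ) < p := by linarith
  set s : ℝ := 1 / p with hsdef
  have hs0 : 0 < s := by positivity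
  have hs1 : s ≤ 1 := by rw [hsdef, div_le_one hp0]; linarith
  have hsp : s * p = 1 := by rw [hsdef]; field_simp
  have hAnn : ∀ k, 0 ≤ A k := by
    intro k; induction k with
    | zero => rw [hA0]
    | succ n ih => rw [hrec n]; have := hαpos n; linarith
  have hApos : ∀ k, 0 < A (k+1) := by
    intro k; rw [hrec k]; have := hαpos k; have := hAnn k; linarith
  set D : ℝ := ε ^ ρ / (2 * Lν) ^ (1 + ρ) with hDdef
  have hDpos : 0 < D := by
    apply div_pos (Real.rpow_pos_of_pos hε _) (Real.rpow_pos_of_pos (by linarith) _)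
  set c : ℝ := D ^ s with hcdef
  have hcpos : 0 < c := Real.rpow_pos_of_pos hDpos _
  clear_value ρ p s D c
  -- Step B : α (k+1) ≥ c * A (k+1) ^ (1-s)
  have hstepB : ∀ k, c * A (k+1) ^ (1 - s) ≤ α (k+1) := by
    intro k
    set a := α (k+1) with hadef
    set B := A (k+1) with hBdef
    have ha : 0 < a := hαpos k
    have hB : 0 < B := hApos k
    have hLceq : Lc (k+1) = B / a ^ 2 := by
      rw [hBdef, hadef, hAL k]; field_simp [(hαpos k).ne']
    have hXeq : Lν / (2 * (ε * a / (4 * B))) = 2 * Lν * B / (ε * a) := by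
      field_simp; ring
    have h2 := hLc k
    rw [hLceq, hXeq] at h2
    have hX0 : 0 ≤ 2 * Lν * B / (ε * a) := by positivity
    have h3 : (2 * Lν * B / (ε * a) * ρ) ^ ρ ≤ (2 * Lν * B / (ε * a)) ^ ρ :=
      Real.rpow_le_rpow (by positivity) (by nlinarith) hρ0
    have h4 : (2 * Lν * B / (ε * a)) ^ ρ = (2*Lν) ^ ρ * B ^ ρ / (ε ^ ρ * a ^ ρ) := by
      rw [Real.div_rpow (by positivity) (by positivity),
        Real.mul_rpow (by positivity) hB.le, Real.mul_rpow hε.le ha.le]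
    have h5 : B / a ^ 2 ≤ 2 * Lν * ((2*Lν) ^ ρ * B ^ ρ / (ε ^ ρ * a ^ ρ)) := by
      rw [← h4]; nlinarith [h3]
    have hBρ : 0 < B ^ ρ := Real.rpow_pos_of_pos hB ρ
    have haρ : 0 < a ^ ρ := Real.rpow_pos_of_pos ha ρ
    have hερ : 0 < ε ^ ρ := Real.rpow_pos_of_pos hε ρ
    have h2L : 0 < (2*Lν) ^ ρ := Real.rpow_pos_of_pos (by linarith) ρ
    rw [div_le_iff₀ (by positivity)] at h5
    -- h5 : B ≤ 2 * Lν * ((2Lν)^ρ * B^ρ / (ε^ρ * a^ρ)) * a^2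
    have h5' : B * (ε ^ ρ * a ^ ρ) ≤ 2 * Lν * ((2*Lν) ^ ρ * B ^ ρ) * a ^ 2 := by
      calc B * (ε ^ ρ * a ^ ρ)
          ≤ (2 * Lν * ((2*Lν) ^ ρ * B ^ ρ / (ε ^ ρ * a ^ ρ)) * a ^ 2) * (ε ^ ρ * a ^ ρ) :=
            mul_le_mul_of_nonneg_right h5 (by positivity)
        _ = 2 * Lν * ((2*Lν) ^ ρ * B ^ ρ) * a ^ 2 := by field_simp
    have hBsplit : B ^ (1-ρ) * B ^ ρ = B := by rw [← Real.rpow_add hB]; simp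
    have hasplit : a ^ (2-ρ) * a ^ ρ = a ^ 2 := by
      rw [← Real.rpow_add ha, show (2 - ρ + ρ) = (2:ℝ) by ring, Real.rpow_two]
    have h2Lsplit : (2*Lν) ^ (1+ρ) = (2*Lν) * (2*Lν) ^ ρ := by
      rw [Real.rpow_add (by linarith), Real.rpow_one]
    have hkey : ε ^ ρ * B ^ (1-ρ) ≤ (2*Lν) ^ (1+ρ) * a ^ (2-ρ) := by
      rw [← mul_le_mul_iff_left₀ (mul_pos hBρ haρ)]
      calc ε ^ ρ * B ^ (1-ρ) * (B ^ ρ * a ^ ρ)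
          = B * (ε ^ ρ * a ^ ρ) := by
            rw [show ε ^ ρ * B ^ (1-ρ) * (B ^ ρ * a ^ ρ)
              = B ^ (1-ρ) * B ^ ρ * (ε ^ ρ * a ^ ρ) by ring, hBsplit]
        _ ≤ 2 * Lν * ((2*Lν) ^ ρ * B ^ ρ) * a ^ 2 := h5'
        _ = (2*Lν) ^ (1+ρ) * a ^ (2-ρ) * (B ^ ρ * a ^ ρ) := by
            rw [h2Lsplit, ← hasplit]; ring
    have hkey2 : D * B ^ (p-1) ≤ a ^ p := by
      rw [show p - 1 = 1 - ρ by rw [hpdef]; ring, hpdef, hDdef, div_mul_eq_mul_div,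
        div_le_iff₀ (Real.rpow_pos_of_pos (by linarith) _)]
      linarith [hkey]
    have h6 := Real.rpow_le_rpow (by positivity) hkey2 hs0.le
    rw [Real.mul_rpow hDpos.le (Real.rpow_nonneg hB.le _)] at h6
    have e1 : (a ^ p) ^ s = a := by
      rw [← Real.rpow_mul ha.le, mul_comm p s, hsp, Real.rpow_one]
    have e2 : (B ^ (p-1)) ^ s = B ^ (1-s) := by
      rw [← Real.rpow_mul hB.le]
      congr 1
      rw [hsdef]; field_simp
    rw [e1, e2, ← hcdef] at h6
    exact h6
  -- Step C : A (k+1)^s ≥ A k ^ s + s * c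
  have hstepC : ∀ k, A k ^ s + s * c ≤ A (k+1) ^ s := by
    intro k
    have hB := hApos k
    have hcon := aux_concave (hAnn k) hB hs0 hs1
    have hα : A (k+1) - A k = α (k+1) := by rw [hrec k]; ring
    have hb1s : 0 < A (k+1) ^ (1-s) := Real.rpow_pos_of_pos hB _
    have h := hstepB k
    have h7 : A (k+1) ^ (1-s) * (s * c) ≤ A (k+1) ^ (1-s) * (A (k+1) ^ s - A k ^ s) := by
      refine le_trans ?_ hcon
      rw [hα]; nlinarith [h, hs0]
    have := (mul_le_mul_iff_right₀ hb1s).mp h7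
    linarith
  -- Step D : A N ^ s ≥ N * (s*c)
  have hstepD : ∀ N : ℕ, (N:ℝ) * (s*c) ≤ A N ^ s := by
    intro N; induction N with
    | zero => simp [hA0, Real.zero_rpow hs0.ne']
    | succ n ih =>
      have := hstepC n
      push_cast
      linarith
  intro N hN
  have h1 : ((N:ℝ) * (s*c)) ^ p ≤ (A N ^ s) ^ p :=
    Real.rpow_le_rpow (by positivity) (hstepD N) hp0.le
  have h2 : (A N ^ s) ^ p = A N := by
    rw [← Real.rpow_mul (hAnn N), hsp, Real.rpow_one]
  have h3 : ((N:ℝ) * (s*c)) ^ p = (N:ℝ) ^ p * (s ^ p * c ^ p) := by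
    rw [Real.mul_rpow (by positivity) (by positivity), Real.mul_rpow hs0.le hcpos.le]
  have hcp : c ^ p = D := by
    rw [hcdef, ← Real.rpow_mul hDpos.le, hsp, Real.rpow_one]
  have hsP : s ^ p = 1 / p ^ p := by
    rw [hsdef, Real.div_rpow zero_le_one hp0.le, Real.one_rpow]
  have hpp : p ^ p ≤ (4:ℝ) ^ (p-1) := aux_pow_self hp1 hp2
  have hppos : 0 < p ^ p := Real.rpow_pos_of_pos hp0 _
  have h4pos : (0:ℝ) < (4:ℝ) ^ (p-1) := Real.rpow_pos_of_pos (by norm_num) _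
  have h2Lpos : (0:ℝ) < (2*Lν) ^ (1+ρ) := Real.rpow_pos_of_pos (by linarith) _
  have eA : (1 + 3*ν) / (1 + ν) = p := by
    rw [hpdef, hρdef]; field_simp; ring
  have eB : (2 + 4*ν) / (1 + ν) = 3 - ρ := by
    rw [hρdef]; field_simp; ring
  have eC : 2 / (1 + ν) = 1 + ρ := by
    rw [hρdef]; field_simp; ring
  have edenom : (2:ℝ) ^ (3-ρ) * Lν ^ (1+ρ) = (2*Lν) ^ (1+ρ) * (4:ℝ) ^ (p-1) := by
    rw [Real.mul_rpow (by norm_num) hLν.le,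
      show (4:ℝ) ^ (p-1) = ((2:ℝ) ^ (2:ℝ)) ^ (p-1) by norm_num [Real.rpow_two],
      ← Real.rpow_mul (by norm_num : (0:ℝ) ≤ 2)]
    rw [show (2:ℝ) ^ (1+ρ) * Lν ^ (1+ρ) * (2:ℝ) ^ (2*(p-1))
        = (2:ℝ) ^ (1+ρ) * (2:ℝ) ^ (2*(p-1)) * Lν ^ (1+ρ) by ring,
      ← Real.rpow_add (by norm_num : (0:ℝ) < 2),
      show 1 + ρ + 2*(p-1) = 3 - ρ by rw [hpdef]; ring]
  rw [eA, eB, eC, edenom]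
  have hmain : (N:ℝ) ^ p * ε ^ ρ / ((2*Lν) ^ (1+ρ) * p ^ p) ≤ A N := by
    have heq : (N:ℝ) ^ p * ε ^ ρ / ((2*Lν) ^ (1+ρ) * p ^ p) = ((N:ℝ) * (s*c)) ^ p := by
      rw [h3, hsP, hcp, hDdef]
      field_simp
    rw [heq, ← h2]
    exact h1
  refine le_trans (le_trans ?_ hmain) le_rfl
  apply div_le_div_of_nonneg_left (by positivity) (by positivity)
  exact mul_le_mul_of_nonneg_left hpp h2Lpos.le
end

section
/- Let N ≥ 1, let x_0,…,x_N ∈ Q and u_0 = x_0, u_1,…,u_N ∈ Q, and let 0 = A_0 < A_1 < … < A_N with A_{k+1} = A_k + α_{k+1} and A_N ≥ (N+1)²/(8L). Suppose for each k = 0,…,N−1 and every x ∈ Q: A_{k+1}·F(x_{k+1}) − A_k·F(x_k) + V(x,u_{k+1}) − V(x,u_k) ≤ α_{k+1}·F(x) + 2R_Q². Suppose x_* ∈ Q minimizes F on Q, V(x_*,x_0) ≤ R², and V ≥ 0. Then F(x_N) − F(x_*) ≤ 8LR²/(N+1)² + 16L·R_Q²/(N+1). -/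
/-- Convergence of the conditional-gradient (Frank–Wolfe) version
of the fast method, where each auxiliary problem is solved with inexactness
`δ̃_k = 2R_Q²` and oracle error `δ_k = 0`:
`F(x_N) − F(x_*) ≤ 8LR²/(N+1)² + 16L R_Q²/(N+1)`. -/
theorem stmt15 {E : Type*} [NormedAddCommGroup E] [NormedSpace ℝ E]
    (Q : Set E) (hQ : Convex ℝ Q)
    (F : E → ℝ) (L R RQ : ℝ) (hL : 0 < L) (hR : 0 < R) (hRQ : 0 < RQ)
    (V : E → E → ℝ) (hVpos : ∀ x ∈ Q, ∀ y ∈ Q, 0 ≤ V x y)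
    (hVbound : ∀ x ∈ Q, ∀ y ∈ Q, V x y ≤ RQ ^ 2)
    (N : ℕ) (hN : 1 ≤ N)
    (x u : ℕ → E) (hx : ∀ k ≤ N, x k ∈ Q) (hu : ∀ k ≤ N, u k ∈ Q)
    (hu0 : u 0 = x 0)
    (A α : ℕ → ℝ) (hA0 : A 0 = 0)
    (hAmono : ∀ k < N, A k < A (k + 1))
    (hArec : ∀ k < N, A (k + 1) = A k + α (k + 1))
    (hAN : ((N : ℝ) + 1) ^ 2 / (8 * L) ≤ A N)
    (hiter : ∀ k < N, ∀ z ∈ Q,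
      A (k + 1) * F (x (k + 1)) - A k * F (x k) + V z (u (k + 1)) - V z (u k) ≤
        α (k + 1) * F z + 2 * RQ ^ 2)
    (xstar : E) (hxstar : xstar ∈ Q) (hmin : ∀ z ∈ Q, F xstar ≤ F z)
    (hR2 : V xstar (x 0) ≤ R ^ 2) :
    F (x N) - F xstar ≤ 8 * L * R ^ 2 / ((N : ℝ) + 1) ^ 2
      + 16 * L * RQ ^ 2 / ((N : ℝ) + 1) := by
  have key : ∀ k ≤ N, A k * (F (x k) - F xstar) + V xstar (u k) ≤
      V xstar (u 0) + 2 * k * RQ ^ 2 := by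
    intro k hk
    induction k with
    | zero => simp [hA0]
    | succ n ih =>
      have hnN : n < N := hk
      have ih' := ih (le_of_lt hnN)
      have h := hiter n hnN xstar hxstar
      have hα : α (n + 1) = A (n + 1) - A n := by
        have := hArec n hnN; linarith
      push_cast
      push_cast at ih'
      rw [hα] at h
      nlinarith [h, ih']
  have hkey := key N le_rfl
  have hAN0 : 0 < A N := by
    have h1 : (0:ℝ) < ((N:ℝ)+1)^2 / (8*L) := by positivity
    linarith
  have hVN : 0 ≤ V xstar (u N) := hVpos _ hxstar _ (hu N le_rfl)
  have hmain : A N * (F (x N) - F xstar) ≤ R ^ 2 + 2 * N * RQ ^ 2 := by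
    rw [hu0] at hkey
    linarith
  have hF : 0 ≤ F (x N) - F xstar := by
    have := hmin (x N) (hx N le_rfl); linarith
  have hdiv : F (x N) - F xstar ≤ (R ^ 2 + 2 * N * RQ ^ 2) / A N := by
    rw [le_div_iff₀ hAN0]
    calc (F (x N) - F xstar) * A N = A N * (F (x N) - F xstar) := by ring
      _ ≤ _ := hmain
  have hAinv : (R ^ 2 + 2 * N * RQ ^ 2) / A N ≤
      (R ^ 2 + 2 * N * RQ ^ 2) * (8 * L) / ((N:ℝ)+1)^2 := by
    rw [div_le_div_iff₀ hAN0 (by positivity)]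
    have hnum : (0:ℝ) ≤ R ^ 2 + 2 * N * RQ ^ 2 := by positivity
    have := (div_le_iff₀ (by positivity : (0:ℝ) < 8*L)).mp hAN
    nlinarith
  have hfin : (R ^ 2 + 2 * N * RQ ^ 2) * (8 * L) / ((N:ℝ)+1)^2 ≤
      8 * L * R ^ 2 / ((N : ℝ) + 1) ^ 2 + 16 * L * RQ ^ 2 / ((N : ℝ) + 1) := by
    have hN1 : (0:ℝ) < (N:ℝ) + 1 := by positivity
    rw [div_add_div _ _ (by positivity) (by positivity), div_le_div_iff₀ (by positivity) (by positivity)]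
    have hNle : (N:ℝ) ≤ (N:ℝ) + 1 := by linarith
    nlinarith [mul_nonneg (mul_nonneg hL.le (sq_nonneg RQ)) (sq_nonneg ((N:ℝ)+1))]
  linarith
end

section
/- Let f₁,…,f_m : E → ℝ be convex differentiable functions on the convex set Q such that each ∇f_i is L_i-Lipschitz on Q, and let f : ℝ^m → ℝ be M-Lipschitz with respect to the ℓ¹-norm on ℝ^m and nondecreasing in each coordinate. Set F(x) = f(f₁(x), …, f_m(x)). Then for all x, y ∈ Q: 0 ≤ F(x) − f( f₁(y) + ⟨∇f₁(y), x − y⟩, …, f_m(y) + ⟨∇f_m(y), x − y⟩ ) ≤ M·(Σ_{i=1}^m L_i)/2 · ‖x − y‖². -/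
open intervalIntegral in
section
variable {E : Type*} [NormedAddCommGroup E] [InnerProductSpace ℝ E]

private lemma line_hasDerivAt (y d : E) {φ : E → ℝ} {g : E} (t : ℝ)
    (h : HasFDerivAt φ (innerSL ℝ g) (y + t • d)) :
    HasDerivAt (fun s : ℝ => φ (y + s • d)) (inner ℝ g d) t := by
  have hline : HasDerivAt (fun s : ℝ => y + s • d) d t := by
    simpa using ((hasDerivAt_id t).smul_const d).const_add y
  have h2 := h.comp_hasDerivAt t hline
  simp at h2
  exact h2

lemma aux_grad {Q : Set E} {φ : E → ℝ} (hconv : ConvexOn ℝ Q φ)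
    {g : E → E} (hder : ∀ y ∈ Q, HasFDerivAt φ (innerSL ℝ (g y)) y)
    {x y : E} (hx : x ∈ Q) (hy : y ∈ Q) :
    (inner ℝ (g y) (x - y) : ℝ) ≤ φ x - φ y := by
  set d := x - y with hd
  have hD : HasDerivAt (fun s : ℝ => φ (y + s • d)) (inner ℝ (g y) d) 0 := by
    have := hder y hy
    exact line_hasDerivAt y d 0 (by simpa using this)
  have hslope := hasDerivAt_iff_tendsto_slope.1 hD
  have hslope' : Filter.Tendsto (slope (fun s : ℝ => φ (y + s • d)) 0)
      (nhdsWithin 0 (Set.Ioi 0)) (nhds (inner ℝ (g y) d : ℝ)) :=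
    hslope.mono_left (nhdsWithin_mono _ (fun t ht => ne_of_gt ht))
  refine le_of_tendsto hslope' ?_
  filter_upwards [Ioo_mem_nhdsGT_of_mem (Set.mem_Ico.2 ⟨le_rfl, one_pos⟩)] with t ht
  have ht0 : 0 < t := ht.1
  have ht1 : t < 1 := ht.2
  have key : φ (y + t • d) ≤ (1 - t) * φ y + t * φ x := by
    have := hconv.2 hy hx (show (0:ℝ) ≤ 1 - t by linarith) ht0.le (show (1 - t) + t = 1 by ring)
    have heq : (1 - t) • y + t • x = y + t • d := by
      rw [hd]; module
    simpa [heq] using this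
  rw [slope_def_field]
  have : (φ (y + t • d) - φ (y + (0:ℝ) • d)) / (t - 0) ≤ φ x - φ y := by
    rw [div_le_iff₀ (by linarith)]
    simp only [zero_smul, add_zero, sub_zero]
    nlinarith [key]
  simpa [slope, div_eq_inv_mul] using this

lemma aux_descent {Q : Set E} (hQ : Convex ℝ Q) {φ : E → ℝ}
    {g : E → E} (hder : ∀ y ∈ Q, HasFDerivAt φ (innerSL ℝ (g y)) y)
    {L : ℝ} (hL : 0 ≤ L)
    (hLip : ∀ a ∈ Q, ∀ b ∈ Q, ‖g a - g b‖ ≤ L * ‖a - b‖)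
    {x y : E} (hx : x ∈ Q) (hy : y ∈ Q) :
    φ x - φ y - (inner ℝ (g y) (x - y) : ℝ) ≤ L / 2 * ‖x - y‖ ^ 2 := by
  set d := x - y with hd
  set c : ℝ → E := fun t => y + t • d with hc
  have hmem : ∀ t ∈ Set.Icc (0:ℝ) 1, c t ∈ Q := fun t ht =>
    hQ.add_smul_sub_mem hy hx ht
  set ψ' : ℝ → ℝ := fun t => inner ℝ (g (c t)) d with hψ'
  have hDer : ∀ t ∈ Set.uIcc (0:ℝ) 1,
      HasDerivAt (fun s : ℝ => φ (c s)) (ψ' t) t := by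
    intro t ht
    rw [Set.uIcc_of_le zero_le_one] at ht
    exact line_hasDerivAt y d t (hder _ (hmem t ht))
  -- Lipschitz bound on ψ'
  have hψlip : ∀ s ∈ Set.Icc (0:ℝ) 1, ∀ t ∈ Set.Icc (0:ℝ) 1,
      |ψ' s - ψ' t| ≤ L * ‖d‖ ^ 2 * |s - t| := by
    intro s hs t ht
    have h1 : ψ' s - ψ' t = inner ℝ (g (c s) - g (c t)) d := by
      simp [hψ', inner_sub_left]
    rw [h1]
    calc |(inner ℝ (g (c s) - g (c t)) d : ℝ)| ≤ ‖g (c s) - g (c t)‖ * ‖d‖ :=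
          abs_real_inner_le_norm _ _
      _ ≤ (L * ‖c s - c t‖) * ‖d‖ := by
          gcongr; exact hLip _ (hmem s hs) _ (hmem t ht)
      _ = L * ‖d‖ ^ 2 * |s - t| := by
          have : c s - c t = (s - t) • d := by rw [hc]; simp; module
          rw [this, norm_smul]
          simp [Real.norm_eq_abs]
          ring
  have hcont : ContinuousOn ψ' (Set.Icc (0:ℝ) 1) := by
    apply LipschitzOnWith.continuousOn (K := Real.toNNReal (L * ‖d‖ ^ 2))
    rw [lipschitzOnWith_iff_dist_le_mul]
    intro s hs t ht
    rw [Real.dist_eq, Real.dist_eq, Real.coe_toNNReal _ (by positivity)]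
    exact hψlip s hs t ht
  have hint : IntervalIntegrable ψ' MeasureTheory.volume 0 1 :=
    hcont.intervalIntegrable_of_Icc zero_le_one
  have hFTC : ∫ t in (0:ℝ)..1, ψ' t = φ (c 1) - φ (c 0) :=
    integral_eq_sub_of_hasDerivAt hDer hint
  have hc1 : c 1 = x := by rw [hc, hd]; simp
  have hc0 : c 0 = y := by rw [hc]; simp
  have hψ'0 : ψ' 0 = inner ℝ (g y) (x - y) := by show (inner ℝ (g (c 0)) d : ℝ) = _; rw [hc0, hd]
  have hsplit : φ x - φ y - (inner ℝ (g y) (x - y) : ℝ)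
      = ∫ t in (0:ℝ)..1, (ψ' t - ψ' 0) := by
    rw [intervalIntegral.integral_sub hint (intervalIntegrable_const),
      hFTC, hc1, hc0, hψ'0]
    simp
  rw [hsplit]
  have hmono : ∫ t in (0:ℝ)..1, (ψ' t - ψ' 0) ≤ ∫ t in (0:ℝ)..1, L * ‖d‖ ^ 2 * t := by
    apply intervalIntegral.integral_mono_on zero_le_one
      (hint.sub intervalIntegrable_const)
      (by apply IntervalIntegrable.const_mul; exact intervalIntegral.intervalIntegrable_id)
    intro t ht
    have := hψlip t ht 0 (Set.mem_Icc.2 ⟨le_rfl, zero_le_one⟩)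
    have h2 : |ψ' t - ψ' 0| ≤ L * ‖d‖ ^ 2 * t := by
      simpa [abs_of_nonneg ht.1] using this
    exact le_trans (le_abs_self _) h2
  calc _ ≤ ∫ t in (0:ℝ)..1, L * ‖d‖ ^ 2 * t := hmono
    _ = L / 2 * ‖x - y‖ ^ 2 := by
        rw [intervalIntegral.integral_const_mul, integral_id]
        rw [hd]; ring

end

/-- superposition of functions: If each `f_i` is convex and
differentiable on `Q` with `L_i`-Lipschitz gradient, and `f : ℝ^m → ℝ` is
`M`-Lipschitz w.r.t. the `ℓ¹`-norm and nondecreasing in each coordinate, then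
for `F(x) = f(f₁(x), …, f_m(x))` and all `x, y ∈ Q`:
`0 ≤ F(x) − f(f₁(y) + ⟨∇f₁(y), x−y⟩, …) ≤ M (Σᵢ Lᵢ)/2 · ‖x − y‖²`. -/
theorem stmt17 {E : Type*} [NormedAddCommGroup E] [InnerProductSpace ℝ E]
    (Q : Set E) (hQ : Convex ℝ Q) (m : ℕ)
    (fi : Fin m → E → ℝ) (hconv : ∀ i, ConvexOn ℝ Q (fi i))
    (gi : Fin m → E → E)
    (hder : ∀ i, ∀ y ∈ Q, HasFDerivAt (fi i) (innerSL ℝ (gi i y)) y)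
    (Li : Fin m → ℝ) (hLi : ∀ i, 0 < Li i)
    (hLip : ∀ i, ∀ x ∈ Q, ∀ y ∈ Q, ‖gi i x - gi i y‖ ≤ Li i * ‖x - y‖)
    (f : (Fin m → ℝ) → ℝ) (M : ℝ) (hM : 0 < M)
    (hfLip : ∀ u v : Fin m → ℝ, |f u - f v| ≤ M * ∑ i, |u i - v i|)
    (hmono : ∀ u v : Fin m → ℝ, (∀ i, u i ≤ v i) → f u ≤ f v)
    (F : E → ℝ) (hF : ∀ x, F x = f (fun i => fi i x)) :
    ∀ x ∈ Q, ∀ y ∈ Q,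
      0 ≤ F x - f (fun i => fi i y + (inner ℝ (gi i y) (x - y) : ℝ)) ∧
      F x - f (fun i => fi i y + (inner ℝ (gi i y) (x - y) : ℝ)) ≤
        M * (∑ i, Li i) / 2 * ‖x - y‖ ^ 2 := by
  intro x hx y hy
  set u : Fin m → ℝ := fun i => fi i x with hu
  set v : Fin m → ℝ := fun i => fi i y + (inner ℝ (gi i y) (x - y) : ℝ) with hv
  have hvu : ∀ i, v i ≤ u i := by
    intro i
    have := aux_grad (hconv i) (hder i) hx hy
    show fi i y + (inner ℝ (gi i y) (x - y) : ℝ) ≤ fi i x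
    linarith
  have hbound : ∀ i, u i - v i ≤ Li i / 2 * ‖x - y‖ ^ 2 := by
    intro i
    have := aux_descent hQ (hder i) (hLi i).le (hLip i) hx hy
    show fi i x - (fi i y + (inner ℝ (gi i y) (x - y) : ℝ)) ≤ _
    linarith
  constructor
  · rw [hF]
    have := hmono v u hvu
    linarith
  · rw [hF]
    have h1 : f u - f v ≤ M * ∑ i, |u i - v i| := le_trans (le_abs_self _) (hfLip u v)
    have h2 : ∑ i, |u i - v i| ≤ ∑ i, Li i / 2 * ‖x - y‖ ^ 2 := by
      apply Finset.sum_le_sum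
      intro i _
      rw [abs_of_nonneg (by linarith [hvu i])]
      exact hbound i
    have h3 : M * ∑ i, Li i / 2 * ‖x - y‖ ^ 2 = M * (∑ i, Li i) / 2 * ‖x - y‖ ^ 2 := by
      rw [← Finset.sum_mul, ← Finset.sum_div]; ring
    calc f u - f v ≤ M * ∑ i, |u i - v i| := h1
      _ ≤ M * ∑ i, Li i / 2 * ‖x - y‖ ^ 2 := mul_le_mul_of_nonneg_left h2 hM.le
      _ = _ := h3
end

section
/- Let F : E × H → ℝ be jointly convex and differentiable with L-Lipschitz gradient (‖∇F(y′,x′) − ∇F(y,x)‖ ≤ L‖(y′,x′) − (y,x)‖ for all y, y′ ∈ Q, x, x′ ∈ H), let Q ⊆ E be convex and closed, and define f(x) = min_{y ∈ Q} F(y,x), assuming the minimum is attained for every x ∈ H. Fix x ∈ H, δ ≥ 0, and ỹ ∈ Q such that ⟨∇_y F(ỹ,x), y − ỹ⟩ ≥ −δ for all y ∈ Q. Then: (a) F(ỹ,x) − f(x) ≤ δ; (b) x ↦ f(x) is differentiable with ‖∇f(x′) − ∇f(x)‖ ≤ L‖x′ − x‖ for all x, x′ ∈ H; and (c) for all z ∈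 H: 0 ≤ f(z) − (F(ỹ,x) − 2δ) − ⟨∇_x F(ỹ,x), z − x⟩ ≤ L‖z − x‖² + 6δ, i.e. the pair (F(ỹ,x) − 2δ, ⟨∇_x F(ỹ,x), · − x⟩) is a (6δ, 2L)-model of f at x. -/
lemma grad_ineq {E' : Type*} [NormedAddCommGroup E'] [NormedSpace ℝ E']
    {s : Set E'} {g : E' → ℝ} (hg : ConvexOn ℝ s g)
    {q : E'} (hq : q ∈ s) {D : E' →L[ℝ] ℝ} (hD : HasFDerivAt g D q)
    {p : E'} (hp : p ∈ s) : g q + D (p - q) ≤ g p := by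
  have hγ : HasDerivAt (fun t : ℝ => q + t • (p - q)) (p - q) 0 := by
    simpa using ((hasDerivAt_id (0:ℝ)).smul_const (p - q)).const_add q
  have hD' : HasFDerivAt g D (q + (0:ℝ) • (p - q)) := by simpa using hD
  have hφ : HasDerivAt (fun t : ℝ => g (q + t • (p - q))) (D (p - q)) 0 := by
    have := hD'.comp_hasDerivAt 0 hγ
    exact this
  have hslope : Filter.Tendsto (slope (fun t : ℝ => g (q + t • (p - q))) 0)
      (nhdsWithin 0 (Set.Ioi 0)) (nhds (D (p - q))) := by
    have h := hasDerivAt_iff_tendsto_slope.mp hφ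
    exact h.mono_left (nhdsWithin_mono _ (fun t ht => Set.mem_compl_singleton_iff.mpr (ne_of_gt ht)))
  have key : D (p - q) ≤ g p - g q := by
    refine le_of_tendsto hslope ?_
    filter_upwards [Ioc_mem_nhdsGT_of_mem (by norm_num : (0:ℝ) ∈ Set.Ico 0 1)] with t ht
    have ht0 : 0 < t := ht.1
    have hcx : g ((1 - t) • q + t • p) ≤ (1 - t) * g q + t * g p :=
      hg.2 hq hp (by linarith [ht.2]) (le_of_lt ht0) (by ring)
    have heq : q + t • (p - q) = (1 - t) • q + t • p := by module
    have hφt : g (q + t • (p - q)) - g (q + (0:ℝ) • (p - q)) ≤ t * (g p - g q) := by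
      rw [heq]; simp only [zero_smul, add_zero]; nlinarith
    rw [slope_def_field, sub_zero, div_le_iff₀ ht0]
    simpa [mul_comm] using hφt
  linarith

lemma deriv_nonneg_of_min {φ : ℝ → ℝ} {d : ℝ} (hφ : HasDerivAt φ d 0)
    (hmin : ∀ t ∈ Set.Ioc (0:ℝ) 1, φ 0 ≤ φ t) : 0 ≤ d := by
  have hslope : Filter.Tendsto (slope φ 0) (nhdsWithin 0 (Set.Ioi 0)) (nhds d) :=
    (hasDerivAt_iff_tendsto_slope.mp hφ).mono_left
      (nhdsWithin_mono _ (fun t ht => Set.mem_compl_singleton_iff.mpr (ne_of_gt ht)))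
  refine ge_of_tendsto hslope ?_
  filter_upwards [Ioc_mem_nhdsGT_of_mem (by norm_num : (0:ℝ) ∈ Set.Ico 0 1)] with t ht
  rw [slope_def_field, sub_zero]
  exact div_nonneg (by linarith [hmin t ht]) (le_of_lt ht.1)

lemma descent {H : Type*} [NormedAddCommGroup H] [InnerProductSpace ℝ H]
    {g : H → ℝ} {G : H → H} {L : ℝ}
    (hder : ∀ w : H, HasFDerivAt g (innerSL ℝ (G w)) w)
    (hlip : ∀ w w' : H, ‖G w' - G w‖ ≤ L * ‖w' - w‖)
    (x z : H) : g z ≤ g x + inner ℝ (G x) (z - x) + L / 2 * ‖z - x‖ ^ 2 := by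
  set c := z - x with hc
  have hγ : ∀ t : ℝ, HasDerivAt (fun t : ℝ => x + t • c) c t := fun t => by
    simpa using ((hasDerivAt_id t).smul_const c).const_add x
  have hφ : ∀ t : ℝ, HasDerivAt (fun t : ℝ => g (x + t • c))
      (inner ℝ (G (x + t • c)) c : ℝ) t := fun t => by
    simpa [Function.comp_def] using (hder (x + t • c)).comp_hasDerivAt t (hγ t)
  have hGlip : LipschitzWith (Real.toNNReal L) G := by
    refine LipschitzWith.of_dist_le_mul fun a b => ?_
    rw [dist_eq_norm, dist_eq_norm]
    exact (hlip b a).trans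
      (mul_le_mul_of_nonneg_right (Real.le_coe_toNNReal L) (norm_nonneg _))
  have hcont : Continuous fun t : ℝ => (inner ℝ (G (x + t • c)) c : ℝ) := by
    apply Continuous.inner
    · exact hGlip.continuous.comp (by continuity)
    · exact continuous_const
  have hint : IntervalIntegrable (fun t : ℝ => (inner ℝ (G (x + t • c)) c : ℝ))
      MeasureTheory.volume 0 1 := hcont.intervalIntegrable 0 1
  have heq : ∫ t in (0:ℝ)..1, (inner ℝ (G (x + t • c)) c : ℝ)
      = g (x + (1:ℝ) • c) - g (x + (0:ℝ) • c) :=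
    intervalIntegral.integral_eq_sub_of_hasDerivAt (fun t _ => hφ t) hint
  have hint2 : IntervalIntegrable (fun t : ℝ => (inner ℝ (G x) c : ℝ) + L * ‖c‖ ^ 2 * t)
      MeasureTheory.volume 0 1 := (Continuous.intervalIntegrable (by continuity) 0 1)
  have hmono : ∫ t in (0:ℝ)..1, (inner ℝ (G (x + t • c)) c : ℝ)
      ≤ ∫ t in (0:ℝ)..1, ((inner ℝ (G x) c : ℝ) + L * ‖c‖ ^ 2 * t) := by
    apply intervalIntegral.integral_mono_on (by norm_num) hint hint2
    intro t ht
    have h1 : (inner ℝ (G (x + t • c)) c : ℝ) - (inner ℝ (G x) c : ℝ)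
        = inner ℝ (G (x + t • c) - G x) c := by rw [inner_sub_left]
    have h2 : (inner ℝ (G (x + t • c) - G x) c : ℝ) ≤ ‖G (x + t • c) - G x‖ * ‖c‖ :=
      real_inner_le_norm _ _
    have h3 : ‖G (x + t • c) - G x‖ ≤ L * ‖t • c‖ := by
      simpa using hlip x (x + t • c)
    have h4 : ‖t • c‖ = t * ‖c‖ := by
      rw [norm_smul, Real.norm_eq_abs, abs_of_nonneg ht.1]
    have h5 : ‖G (x + t • c) - G x‖ * ‖c‖ ≤ L * (t * ‖c‖) * ‖c‖ := by
      rw [← h4]; exact mul_le_mul_of_nonneg_right h3 (norm_nonneg c)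
    have h6 : L * (t * ‖c‖) * ‖c‖ = L * ‖c‖ ^ 2 * t := by rw [pow_two]; ring
    linarith
  have hval : ∫ t in (0:ℝ)..1, ((inner ℝ (G x) c : ℝ) + L * ‖c‖ ^ 2 * t)
      = (inner ℝ (G x) c : ℝ) + L * ‖c‖ ^ 2 / 2 := by
    rw [intervalIntegral.integral_add (intervalIntegrable_const)
      ((by fun_prop : Continuous fun t : ℝ => L * ‖c‖ ^ 2 * t).intervalIntegrable 0 1),
      intervalIntegral.integral_const, intervalIntegral.integral_const_mul,
      integral_id]
    norm_num
    ring
  have := heq ▸ hmono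
  simp only [one_smul, zero_smul, add_zero] at this
  have hxc : x + c = z := by rw [hc]; abel
  rw [hxc] at this
  rw [hval] at this
  nlinarith

/-- min-min problem: Let `F : E × H → ℝ` be jointly convex and
differentiable with partial gradients `∇_y F = Gy`, `∇_x F = Gx` that are
jointly `L`-Lipschitz (w.r.t. the Euclidean product norm, expressed via square
roots of sums of squared norms), let `Q ⊆ E` be convex and closed, and let
`f(x) = min_{y ∈ Q} F(y, x)` (attained). If `ỹ = ỹ ∈ Q` satisfies
`⟨∇_y F(ỹ, x), y − ỹ⟩ ≥ −δ` for all `y ∈ Q`, then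
(a) `F(ỹ, x) − f(x) ≤ δ`;
(b) `f` is differentiable with `L`-Lipschitz gradient; and
(c) `(F(ỹ, x) − 2δ, ⟨∇_x F(ỹ, x), · − x⟩)` is a `(6δ, 2L)`-model of `f`
at `x`: `0 ≤ f(z) − (F(ỹ,x) − 2δ) − ⟨∇_x F(ỹ,x), z − x⟩ ≤ L‖z − x‖² + 6δ`. -/
theorem stmt18 {E H : Type*} [NormedAddCommGroup E] [InnerProductSpace ℝ E]
    [NormedAddCommGroup H] [InnerProductSpace ℝ H]
    (Q : Set E) (hQconv : Convex ℝ Q) (hQclosed : IsClosed Q)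
    (F : E → H → ℝ)
    (hconv : ConvexOn ℝ (Q ×ˢ (Set.univ : Set H)) (fun p : E × H => F p.1 p.2))
    (Gy : E → H → E) (Gx : E → H → H)
    (hder : ∀ (y : E) (x : H), HasFDerivAt (fun p : E × H => F p.1 p.2)
      ((innerSL ℝ (Gy y x)).comp (ContinuousLinearMap.fst ℝ E H)
        + (innerSL ℝ (Gx y x)).comp (ContinuousLinearMap.snd ℝ E H)) (y, x))
    (L : ℝ) (hL : 0 < L)
    (hLip : ∀ y ∈ Q, ∀ y' ∈ Q, ∀ x x' : H,
      Real.sqrt (‖Gy y' x' - Gy y x‖ ^ 2 + ‖Gx y' x' - Gx y x‖ ^ 2) ≤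
        L * Real.sqrt (‖y' - y‖ ^ 2 + ‖x' - x‖ ^ 2))
    (f : H → ℝ) (hf : ∀ x : H, IsLeast ((fun y => F y x) '' Q) (f x))
    (x : H) (δ : ℝ) (hδ : 0 ≤ δ)
    (yt : E) (hyt : yt ∈ Q)
    (happrox : ∀ y ∈ Q, -δ ≤ (inner ℝ (Gy yt x) (y - yt) : ℝ)) :
    (F yt x - f x ≤ δ) ∧
    (∃ gf : H → H, (∀ x' : H, HasFDerivAt f (innerSL ℝ (gf x')) x') ∧
      ∀ x' x'' : H, ‖gf x' - gf x''‖ ≤ L * ‖x' - x''‖) ∧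
    (∀ z : H,
      0 ≤ f z - (F yt x - 2 * δ) - (inner ℝ (Gx yt x) (z - x) : ℝ) ∧
      f z - (F yt x - 2 * δ) - (inner ℝ (Gx yt x) (z - x) : ℝ) ≤
        L * ‖z - x‖ ^ 2 + 6 * δ) := by
  -- minimizers
  have hminex : ∀ w : H, ∃ y, y ∈ Q ∧ F y w = f w := by
    intro w
    obtain ⟨y, hyQ, hEq⟩ := (hf w).1
    exact ⟨y, hyQ, hEq⟩
  choose ys hysQ hysEq using hminex
  have hlb : ∀ (w : H), ∀ y ∈ Q, f w ≤ F y w := fun w y hy => (hf w).2 ⟨y, hy, rfl⟩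
  -- gradient inequality for F
  have key1 : ∀ y ∈ Q, ∀ (w : H), ∀ y' ∈ Q, ∀ w' : H,
      F y w + ((inner ℝ (Gy y w) (y' - y) : ℝ) + (inner ℝ (Gx y w) (w' - w) : ℝ)) ≤ F y' w' := by
    intro y hy w y' hy' w'
    have h := grad_ineq hconv (q := (y, w)) ⟨hy, Set.mem_univ w⟩ (hder y w)
      (p := (y', w')) ⟨hy', Set.mem_univ w'⟩
    simpa [Prod.sub_def] using h
  -- partial derivative in x
  have hpart : ∀ (y : E) (u : H), HasFDerivAt (fun u => F y u) (innerSL ℝ (Gx y u)) u := by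
    intro y u
    have hγ : HasFDerivAt (fun u : H => ((y, u) : E × H))
        ((ContinuousLinearMap.inr ℝ E H)) u :=
      (hasFDerivAt_const y u).prodMk (hasFDerivAt_id u)
    have h := (hder y u).comp u hγ
    refine h.congr_fderiv ?_
    ext v
    simp
  -- Lipschitz of x-partial gradient along fixed y ∈ Q
  have hGxlip : ∀ y ∈ Q, ∀ u u' : H, ‖Gx y u' - Gx y u‖ ≤ L * ‖u' - u‖ := by
    intro y hy u u'
    have h := hLip y hy y hy u u'
    have h1 : ‖Gx y u' - Gx y u‖
        ≤ Real.sqrt (‖Gy y u' - Gy y u‖ ^ 2 + ‖Gx y u' - Gx y u‖ ^ 2) := by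
      calc ‖Gx y u' - Gx y u‖ = Real.sqrt (‖Gx y u' - Gx y u‖ ^ 2) :=
            (Real.sqrt_sq (norm_nonneg _)).symm
        _ ≤ Real.sqrt (‖Gy y u' - Gy y u‖ ^ 2 + ‖Gx y u' - Gx y u‖ ^ 2) :=
            Real.sqrt_le_sqrt (le_add_of_nonneg_left (sq_nonneg _))
    have h2 : Real.sqrt (‖y - y‖ ^ 2 + ‖u' - u‖ ^ 2) = ‖u' - u‖ := by
      simp [Real.sqrt_sq (norm_nonneg _)]
    rw [h2] at h
    linarith
  -- first-order optimality of exact minimizers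
  have hopt : ∀ (w : H), ∀ y ∈ Q, 0 ≤ (inner ℝ (Gy (ys w) w) (y - ys w) : ℝ) := by
    intro w y hy
    set y0 := ys w with hy0
    have hγ1 : HasDerivAt (fun t : ℝ => y0 + t • (y - y0)) (y - y0) 0 := by
      simpa using ((hasDerivAt_id (0:ℝ)).smul_const (y - y0)).const_add y0
    have hγ : HasDerivAt (fun t : ℝ => ((y0 + t • (y - y0), w) : E × H)) ((y - y0, 0)) 0 :=
      hγ1.prodMk (hasDerivAt_const 0 w)
    have hD' : HasFDerivAt (fun p : E × H => F p.1 p.2)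
        ((innerSL ℝ (Gy y0 w)).comp (ContinuousLinearMap.fst ℝ E H)
          + (innerSL ℝ (Gx y0 w)).comp (ContinuousLinearMap.snd ℝ E H))
        ((y0 + (0:ℝ) • (y - y0), w)) := by simpa using hder y0 w
    have hφ : HasDerivAt (fun t : ℝ => F (y0 + t • (y - y0)) w)
        ((inner ℝ (Gy y0 w) (y - y0) : ℝ)) 0 := by
      have := hD'.comp_hasDerivAt 0 hγ
      simpa [Function.comp_def] using this
    apply deriv_nonneg_of_min hφ
    intro t ht
    have hmem : y0 + t • (y - y0) ∈ Q := by
      have := hQconv (hysQ w) hy (by linarith [ht.2] : (0:ℝ) ≤ 1 - t) (le_of_lt ht.1) (by ring)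
      convert this using 1
      module
    simp only [zero_smul, add_zero]
    calc F y0 w = f w := hysEq w
      _ ≤ F (y0 + t • (y - y0)) w := hlb w _ hmem
  set gf : H → H := fun w => Gx (ys w) w with hgf
  -- sandwich
  have hlow : ∀ w z : H, f w + (inner ℝ (gf w) (z - w) : ℝ) ≤ f z := by
    intro w z
    have h := key1 (ys w) (hysQ w) w (ys z) (hysQ z) z
    rw [hysEq w, hysEq z] at h
    have := hopt w (ys z) (hysQ z)
    simp only [hgf]
    linarith
  have hup : ∀ w z : H, f z ≤ f w + (inner ℝ (gf w) (z - w) : ℝ) + L / 2 * ‖z - w‖ ^ 2 := by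
    intro w z
    have hd := descent (hpart (ys w)) (hGxlip (ys w) (hysQ w)) w z
    rw [hysEq w] at hd
    exact le_trans (hlb z (ys w) (hysQ w)) hd
  -- differentiability
  have hdiff : ∀ w : H, HasFDerivAt f (innerSL ℝ (gf w)) w := by
    intro w
    rw [hasFDerivAt_iff_isLittleO_nhds_zero, Asymptotics.isLittleO_iff]
    intro c hc
    have hev : ∀ᶠ h : H in nhds 0, ‖h‖ ≤ 2 * c / L := by
      have hball : Metric.closedBall (0:H) (2*c/L) ∈ nhds (0:H) :=
        Metric.closedBall_mem_nhds _ (by positivity)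
      filter_upwards [hball] with h hh
      simpa [Metric.mem_closedBall, dist_eq_norm] using hh
    filter_upwards [hev] with h hh
    have hb1 := hlow w (w + h)
    have hb2 := hup w (w + h)
    simp only [add_sub_cancel_left] at hb1 hb2
    simp only [innerSL_apply_apply]
    rw [Real.norm_eq_abs, abs_le]
    have hq : L / 2 * ‖h‖ ^ 2 ≤ c * ‖h‖ := by
      have h1 : L / 2 * ‖h‖ ≤ c := by
        rw [div_mul_eq_mul_div, div_le_iff₀ (by norm_num : (0:ℝ) < 2)]
        calc L * ‖h‖ ≤ L * (2 * c / L) := mul_le_mul_of_nonneg_left hh hL.le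
          _ = c * 2 := by field_simp
      calc L / 2 * ‖h‖ ^ 2 = (L / 2 * ‖h‖) * ‖h‖ := by ring
        _ ≤ c * ‖h‖ := mul_le_mul_of_nonneg_right h1 (norm_nonneg h)
    have hcn : 0 ≤ c * ‖h‖ := mul_nonneg hc.le (norm_nonneg h)
    constructor
    · linarith
    · linarith
  -- cocoercivity and Lipschitz gradient
  have hcoco : ∀ a b : H, f a + (inner ℝ (gf a) (b - a) : ℝ)
      + 1 / (2 * L) * ‖gf b - gf a‖ ^ 2 ≤ f b := by
    intro a b
    set g := gf b - gf a with hg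
    set w := b - (1 / L) • g with hw
    have h1 := hup b w
    have h2 := hlow a w
    have hwb : w - b = -((1 / L) • g) := by rw [hw]; abel
    have hwa : w - a = (b - a) - (1 / L) • g := by rw [hw]; abel
    rw [hwb] at h1
    rw [hwa] at h2
    have e1 : (inner ℝ (gf b) (-((1 / L) • g)) : ℝ) = -(1 / L) * inner ℝ (gf b) g := by
      rw [inner_neg_right, inner_smul_right]; ring
    have e2 : ‖-((1 / L) • g)‖ ^ 2 = (1 / L) ^ 2 * ‖g‖ ^ 2 := by
      rw [norm_neg, norm_smul, mul_pow, Real.norm_eq_abs, sq_abs]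
    have e3 : (inner ℝ (gf a) ((b - a) - (1 / L) • g) : ℝ)
        = inner ℝ (gf a) (b - a) - (1 / L) * inner ℝ (gf a) g := by
      rw [inner_sub_right, inner_smul_right]; try ring
    have e4 : (inner ℝ (gf b) g : ℝ) - (inner ℝ (gf a) g : ℝ) = ‖g‖ ^ 2 := by
      rw [← inner_sub_left, ← hg, real_inner_self_eq_norm_sq]
    rw [e1, e2] at h1
    rw [e3] at h2
    have hL' : L ≠ 0 := ne_of_gt hL
    have : f a + inner ℝ (gf a) (b - a) - (1 / L) * inner ℝ (gf a) g
        ≤ f b - (1 / L) * inner ℝ (gf b) g + L / 2 * ((1 / L) ^ 2 * ‖g‖ ^ 2) := by linarith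
    have hfin : (1 / L) * ((inner ℝ (gf b) g : ℝ) - inner ℝ (gf a) g)
        - L / 2 * ((1 / L) ^ 2 * ‖g‖ ^ 2) = 1 / (2 * L) * ‖g‖ ^ 2 := by
      rw [e4]; field_simp; try ring
    linarith [hfin]
  have hlip : ∀ x' x'' : H, ‖gf x' - gf x''‖ ≤ L * ‖x' - x''‖ := by
    intro a b
    have h1 := hcoco a b
    have h2 := hcoco b a
    have e5 : ‖gf a - gf b‖ = ‖gf b - gf a‖ := by rw [norm_sub_rev]
    have hsum : (1 / L) * ‖gf b - gf a‖ ^ 2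
        ≤ (inner ℝ (gf b) (b - a) : ℝ) - inner ℝ (gf a) (b - a) := by
      have e6 : (inner ℝ (gf b) (a - b) : ℝ) = -inner ℝ (gf b) (b - a) := by
        rw [← inner_neg_right]; congr 1; abel
      rw [e5] at h2
      have hhalf : 1 / (2 * L) * ‖gf b - gf a‖ ^ 2 + 1 / (2 * L) * ‖gf b - gf a‖ ^ 2
          = 1 / L * ‖gf b - gf a‖ ^ 2 := by field_simp; ring
      linarith [h1, h2, e6]
    have e7 : (inner ℝ (gf b) (b - a) : ℝ) - inner ℝ (gf a) (b - a)
        = inner ℝ (gf b - gf a) (b - a) := by rw [inner_sub_left]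
    have e8 : (inner ℝ (gf b - gf a) (b - a) : ℝ) ≤ ‖gf b - gf a‖ * ‖b - a‖ :=
      real_inner_le_norm _ _
    rw [e5, norm_sub_rev a b]
    by_cases hz : ‖gf b - gf a‖ = 0
    · rw [hz]; positivity
    · have hpos : 0 < ‖gf b - gf a‖ := lt_of_le_of_ne (norm_nonneg _) (Ne.symm hz)
      have : (1 / L) * ‖gf b - gf a‖ ^ 2 ≤ ‖gf b - gf a‖ * ‖b - a‖ := by
        rw [e7] at hsum; linarith
      rw [pow_two] at this
      have := (mul_le_mul_iff_right₀ hpos).mp (by linarith [this] :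
        ‖gf b - gf a‖ * ((1 / L) * ‖gf b - gf a‖) ≤ ‖gf b - gf a‖ * ‖b - a‖)
      calc ‖gf b - gf a‖ = L * ((1 / L) * ‖gf b - gf a‖) := by field_simp
        _ ≤ L * ‖b - a‖ := mul_le_mul_of_nonneg_left this hL.le
  refine ⟨?_, ⟨gf, hdiff, hlip⟩, ?_⟩
  · -- part (a)
    have h := key1 yt hyt x (ys x) (hysQ x) x
    rw [hysEq x] at h
    have h2 := happrox (ys x) (hysQ x)
    simp only [sub_self, inner_zero_right] at h
    linarith
  · -- part (c)
    intro z
    constructor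
    · have h := key1 yt hyt x (ys z) (hysQ z) z
      rw [hysEq z] at h
      have h2 := happrox (ys z) (hysQ z)
      linarith
    · have hd := descent (hpart yt) (hGxlip yt hyt) x z
      have h3 := hlb z yt hyt
      nlinarith [sq_nonneg ‖z - x‖]
end

section
/- Let Q ⊆ H be convex and closed, φ : Q → ℝ convex, L > 0, and set Λ(x,y) = φ(y) + (L/2)‖y − x‖² and f(x) = min_{y ∈ Q} Λ(x,y) (the minimum over the closed convex set Q of the strongly convex function Λ(x,·) is attained). Fix x ∈ H, δ ≥ 0, and y₀ ∈ Q such that Λ(x,y₀) − Λ(x,y) + (L/2)‖y − y₀‖² ≤ δ for all y ∈ Q. Then for all z ∈ H: 0 ≤ f(z) − (Λ(x,y₀) − δ) − ⟨L·(x − y₀), z − x⟩ ≤ (L/2)‖z − x‖² + δ; that is, the pair (Λ(x,y₀) − δ, ⟨L·(x − y₀), · − x⟩) is a (δ, L)-model of the Moreau-envelope-type function f at x. -/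
/-- Norm expansion helper. -/
lemma expand_sq {H : Type*} [NormedAddCommGroup H] [InnerProductSpace ℝ H]
    (a b : H) : ‖a + b‖ ^ 2 = ‖a‖ ^ 2 + 2 * (inner ℝ a b : ℝ) + ‖b‖ ^ 2 := by
  have := norm_add_sq_real a b
  nlinarith [this]

/-- Moreau-envelope-type / proximal example: Let
`Λ(x,y) = φ(y) + (L/2)‖y − x‖²` with `φ` convex on the closed convex set `Q`,
and `f(x) = min_{y ∈ Q} Λ(x,y)` (attained). If `y₀ ∈ Q` satisfies
`Λ(x,y₀) − Λ(x,y) + (L/2)‖y − y₀‖² ≤ δ` for all `y ∈ Q`, then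
`(Λ(x,y₀) − δ, ⟨L·(x − y₀), · − x⟩)` is a `(δ, L)`-model of `f` at `x`:
`0 ≤ f(z) − (Λ(x,y₀) − δ) − ⟨L·(x − y₀), z − x⟩ ≤ (L/2)‖z − x‖² + δ`. -/
theorem stmt19 {H : Type*} [NormedAddCommGroup H] [InnerProductSpace ℝ H]
    (Q : Set H) (hQconv : Convex ℝ Q) (hQclosed : IsClosed Q)
    (φ : H → ℝ) (hφ : ConvexOn ℝ Q φ)
    (L : ℝ) (hL : 0 < L)
    (Λ : H → H → ℝ) (hΛ : ∀ x y, Λ x y = φ y + L / 2 * ‖y - x‖ ^ 2)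
    (f : H → ℝ) (hf : ∀ x : H, IsLeast ((fun y => Λ x y) '' Q) (f x))
    (x : H) (δ : ℝ) (hδ : 0 ≤ δ)
    (y₀ : H) (hy₀ : y₀ ∈ Q)
    (happrox : ∀ y ∈ Q, Λ x y₀ - Λ x y + L / 2 * ‖y - y₀‖ ^ 2 ≤ δ) :
    ∀ z : H,
      0 ≤ f z - (Λ x y₀ - δ) - (inner ℝ (L • (x - y₀)) (z - x) : ℝ) ∧
      f z - (Λ x y₀ - δ) - (inner ℝ (L • (x - y₀)) (z - x) : ℝ) ≤
        L / 2 * ‖z - x‖ ^ 2 + δ := by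
  intro z
  obtain ⟨⟨y, hyQ, hyeq⟩, hlb⟩ := hf z
  have hsm : (inner ℝ (L • (x - y₀)) (z - x) : ℝ) = L * inner ℝ (x - y₀) (z - x) :=
    real_inner_smul_left _ _ _
  have hA := happrox y hyQ
  -- expansions
  have e1 : ‖y - z‖ ^ 2 = ‖y - x‖ ^ 2 + 2 * (inner ℝ (y - x) (x - z) : ℝ) + ‖x - z‖ ^ 2 := by
    have := expand_sq (y - x) (x - z)
    rwa [sub_add_sub_cancel] at this
  have e2 : (0:ℝ) ≤ ‖y - y₀‖ ^ 2 + 2 * (inner ℝ (y - y₀) (x - z) : ℝ) + ‖x - z‖ ^ 2 := by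
    have := expand_sq (y - y₀) (x - z)
    nlinarith [sq_nonneg ‖(y - y₀) + (x - z)‖]
  have e3 : (inner ℝ (y - y₀) (x - z) : ℝ) =
      inner ℝ (y - x) (x - z) + inner ℝ (x - y₀) (x - z) := by
    rw [← inner_add_left, sub_add_sub_cancel]
  have e4 : (inner ℝ (x - y₀) (z - x) : ℝ) = - inner ℝ (x - y₀) (x - z) := by
    rw [← inner_neg_right, neg_sub]
  have e5 : ‖y₀ - z‖ ^ 2 = ‖y₀ - x‖ ^ 2 + 2 * (inner ℝ (y₀ - x) (x - z) : ℝ) + ‖x - z‖ ^ 2 := by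
    have := expand_sq (y₀ - x) (x - z)
    rwa [sub_add_sub_cancel] at this
  have e6 : (inner ℝ (y₀ - x) (x - z) : ℝ) = inner ℝ (x - y₀) (z - x) := by
    rw [← inner_neg_neg, neg_sub, neg_sub]
  have hnz : ‖z - x‖ ^ 2 = ‖x - z‖ ^ 2 := by rw [← neg_sub, norm_neg]
  constructor
  · -- lower bound: f z = Λ z y ≥ model
    rw [← hyeq]
    simp only [hΛ] at hA ⊢
    rw [hsm]
    nlinarith [e1, e2, e3, e4, hnz]
  · -- upper bound: f z ≤ Λ z y₀
    have hub : f z ≤ Λ z y₀ := hlb ⟨y₀, hy₀, rfl⟩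
    simp only [hΛ] at hub ⊢
    rw [hsm]
    nlinarith [e5, e6, hnz]
end
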